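/- arXiv:1705.06831 — 5 statements merged into one kernel-verified Lean document; each statement's English description precedes it below -/
import Mathlib

section
/- There exists a unique solution g : ℝ → ℝ (up to translation, normalized by g(0) = 0) to the ODE g''(t) = W'(g(t)) with g(0) = 0 and g(t) → ±1 as t → ±∞, and moreover g satisfies the first integral identity g'(t) = √(2 W(g(t))) > 0 for all t ∈ ℝ. -/
open Real Filter MeasureTheory Set Topology

noncomputable def phiW (W : ℝ → ℝ) (x : ℝ) : ℝ := Real.sqrt (2 * W x)
noncomputable def hhW (W : ℝ → ℝ) (x : ℝ) : ℝ := ∫ s in (0:ℝ)..x, (phiW W s)⁻¹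

section
variable {W : ℝ → ℝ}

lemma phiW_pos (hWpos : ∀ s ∈ Set.Ioo (-1:ℝ) 1, 0 < W s) {x : ℝ}
    (hx : x ∈ Set.Ioo (-1:ℝ) 1) : 0 < phiW W x :=
  Real.sqrt_pos.2 (by linarith [hWpos x hx])

lemma phiW_inv_contOn (hW : ContDiff ℝ 2 W) (hWpos : ∀ s ∈ Set.Ioo (-1:ℝ) 1, 0 < W s) :
    ContinuousOn (fun s => (phiW W s)⁻¹) (Set.Ioo (-1:ℝ) 1) := by
  apply ContinuousOn.inv₀
  · exact (Real.continuous_sqrt.comp (continuous_const.mul hW.continuous)).continuousOn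
  · exact fun x hx => (phiW_pos hWpos hx).ne'

lemma hhW_intervalIntegrable (hW : ContDiff ℝ 2 W) (hWpos : ∀ s ∈ Set.Ioo (-1:ℝ) 1, 0 < W s)
    {a b : ℝ} (ha : a ∈ Set.Ioo (-1:ℝ) 1) (hb : b ∈ Set.Ioo (-1:ℝ) 1) :
    IntervalIntegrable (fun s => (phiW W s)⁻¹) volume a b := by
  apply ContinuousOn.intervalIntegrable
  apply (phiW_inv_contOn hW hWpos).mono
  intro x hx
  rcases le_total a b with h | h
  · rw [Set.uIcc_of_le h] at hx; exact ⟨lt_of_lt_of_le ha.1 hx.1, lt_of_le_of_lt hx.2 hb.2⟩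
  · rw [Set.uIcc_of_ge h] at hx; exact ⟨lt_of_lt_of_le hb.1 hx.1, lt_of_le_of_lt hx.2 ha.2⟩

lemma hhW_hasDerivAt (hW : ContDiff ℝ 2 W) (hWpos : ∀ s ∈ Set.Ioo (-1:ℝ) 1, 0 < W s)
    {x : ℝ} (hx : x ∈ Set.Ioo (-1:ℝ) 1) :
    HasDerivAt (hhW W) (phiW W x)⁻¹ x := by
  apply intervalIntegral.integral_hasDerivAt_right
    (hhW_intervalIntegrable hW hWpos (by constructor <;> norm_num) hx)
  · exact (phiW_inv_contOn hW hWpos).stronglyMeasurableAtFilter isOpen_Ioo _ hx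
  · exact (phiW_inv_contOn hW hWpos).continuousAt (Ioo_mem_nhds hx.1 hx.2)

lemma hhW_strictMonoOn (hW : ContDiff ℝ 2 W) (hWpos : ∀ s ∈ Set.Ioo (-1:ℝ) 1, 0 < W s) :
    StrictMonoOn (hhW W) (Set.Ioo (-1:ℝ) 1) := by
  apply strictMonoOn_of_deriv_pos (convex_Ioo _ _)
  · exact fun x hx => (hhW_hasDerivAt hW hWpos hx).continuousAt.continuousWithinAt
  · intro x hx
    rw [interior_Ioo] at hx
    rw [(hhW_hasDerivAt hW hWpos hx).deriv]
    exact inv_pos.2 (phiW_pos hWpos hx)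

lemma W_diff_facts (hW : ContDiff ℝ 2 W) :
    Differentiable ℝ W ∧ Differentiable ℝ (deriv W) ∧ Continuous (deriv (deriv W)) := by
  have h2 : ContDiff ℝ ((1:ℕ) + 1) W := by norm_num; exact hW
  rw [contDiff_succ_iff_deriv] at h2
  have h1 : ContDiff ℝ ((0:ℕ) + 1) (deriv W) := by norm_num; exact h2.2.2
  rw [contDiff_succ_iff_deriv] at h1
  exact ⟨h2.1, h1.1, h1.2.2.continuous⟩

lemma W_quad_bound_right (hW : ContDiff ℝ 2 W)
    (hWpos : ∀ s ∈ Set.Ioo (-1:ℝ) 1, 0 < W s)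
    (hWp1 : W 1 = 0) (hWp1' : deriv W 1 = 0) (hWp1'' : iteratedDeriv 2 W 1 = 2) :
    ∃ δ : ℝ, 0 < δ ∧ δ ≤ 1 ∧ ∀ s, 1 - δ ≤ s → s < 1 → W s ≤ 3 * (1 - s)^2 := by
  obtain ⟨hWd, hWd', hWcont''⟩ := W_diff_facts hW
  have h2 : deriv (deriv W) 1 = 2 := by
    rw [← hWp1'']; rw [iteratedDeriv_succ, iteratedDeriv_one]
  -- find δ with deriv (deriv W) ≤ 3 on ball
  have hev : ∀ᶠ c in nhds (1:ℝ), deriv (deriv W) c < 3 := by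
    have := hWcont''.continuousAt (x := 1)
    exact this.eventually_lt continuousAt_const (by rw [h2]; norm_num)
  obtain ⟨ε, hε, hball⟩ := Metric.eventually_nhds_iff_ball.1 hev
  refine ⟨min 1 (ε/2), by positivity, min_le_left _ _, ?_⟩
  intro s hs hs1
  have hsmem : s ∈ Set.Ioo (-1:ℝ) 1 := by
    constructor
    · have : (0:ℝ) ≤ 1 - min 1 (ε/2) := by simp
      linarith
    · exact hs1
  have hWs : 0 < W s := hWpos s hsmem
  -- first MVT on [s,1]
  obtain ⟨c₁, hc₁, e₁⟩ := exists_deriv_eq_slope W hs1 hWd.continuous.continuousOn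
    hWd.differentiableOn
  -- second MVT on [c₁,1]
  obtain ⟨c₂, hc₂, e₂⟩ := exists_deriv_eq_slope (deriv W) hc₁.2 hWd'.continuous.continuousOn
    hWd'.differentiableOn
  rw [hWp1] at e₁
  rw [hWp1'] at e₂
  have h1s : (0:ℝ) < 1 - s := by linarith
  have h1c₁ : (0:ℝ) < 1 - c₁ := by linarith [hc₁.2]
  have e₁' : deriv W c₁ * (1 - s) = -(W s) := by
    field_simp at e₁; linarith [e₁]
  have e₂' : deriv (deriv W) c₂ * (1 - c₁) = -(deriv W c₁) := by
    field_simp at e₂; linarith [e₂]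
  have hc₂3 : deriv (deriv W) c₂ < 3 := by
    apply hball
    rw [Metric.mem_ball, Real.dist_eq, abs_lt]
    constructor <;> [skip; linarith [hc₂.2]]
    have : 1 - min 1 (ε/2) ≤ c₂ := by linarith [hc₂.1, hc₁.1]
    have : min 1 (ε/2) ≤ ε/2 := min_le_right _ _
    linarith
  have key : W s = deriv (deriv W) c₂ * ((1 - c₁) * (1 - s)) := by
    nlinarith [e₁', e₂']
  have hmono : 1 - c₁ ≤ 1 - s := by linarith [hc₁.1]
  nlinarith [key, hc₂3, mul_pos h1c₁ h1s, hWs]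

lemma log_integral_right {a b : ℝ} (hab : a ≤ b) (hb : b < 1) :
    ∫ s in a..b, ((Real.sqrt 6) * (1 - s))⁻¹
      = (Real.sqrt 6)⁻¹ * (Real.log (1 - a) - Real.log (1 - b)) := by
  have h6 : (0:ℝ) < Real.sqrt 6 := Real.sqrt_pos.2 (by norm_num)
  have key : ∀ t ∈ Set.uIcc a b,
      HasDerivAt (fun s => -((Real.sqrt 6)⁻¹ * Real.log (1 - s)))
        ((Real.sqrt 6 * (1 - t))⁻¹) t := by
    intro t ht
    rw [Set.uIcc_of_le hab] at ht
    have ht1 : (0:ℝ) < 1 - t := by linarith [ht.2]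
    have h1 : HasDerivAt (fun s : ℝ => 1 - s) (-1) t := by
      exact (hasDerivAt_id' t).const_sub 1
    have h2 : HasDerivAt (fun s => Real.log (1 - s)) ((1 - t)⁻¹ * (-1)) t :=
      (Real.hasDerivAt_log ht1.ne').comp t h1
    have h3 := (h2.const_mul ((Real.sqrt 6)⁻¹)).neg
    refine h3.congr_deriv (Eq.symm ?_)
    field_simp
  rw [intervalIntegral.integral_eq_sub_of_hasDerivAt key]
  · ring
  · apply ContinuousOn.intervalIntegrable
    apply ContinuousOn.inv₀
    · fun_prop
    · intro t ht
      rw [Set.uIcc_of_le hab] at ht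
      have : (0:ℝ) < 1 - t := by linarith [ht.2]
      positivity

lemma hhW_tendsto_atTop (hW : ContDiff ℝ 2 W) (hWpos : ∀ s ∈ Set.Ioo (-1:ℝ) 1, 0 < W s)
    (hquad : ∃ δ : ℝ, 0 < δ ∧ δ ≤ 1 ∧ ∀ s, 1 - δ ≤ s → s < 1 → W s ≤ 3 * (1 - s)^2) :
    Tendsto (hhW W) (nhdsWithin 1 (Set.Iio 1)) atTop := by
  obtain ⟨δ, hδ, hδ1, hbd⟩ := hquad
  set x₀ : ℝ := 1 - δ with hx₀def
  have hx₀mem : x₀ ∈ Set.Ioo (-1:ℝ) 1 := ⟨by simp [hx₀def]; linarith, by simp [hx₀def]; linarith⟩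
  have h6 : (0:ℝ) < Real.sqrt 6 := Real.sqrt_pos.2 (by norm_num)
  -- lower bound for hhW x for x ∈ Ioo x₀ 1
  have hlow : ∀ x ∈ Set.Ioo x₀ 1,
      hhW W x₀ + (Real.sqrt 6)⁻¹ * (Real.log (1 - x₀) - Real.log (1 - x)) ≤ hhW W x := by
    intro x hx
    have hxmem : x ∈ Set.Ioo (-1:ℝ) 1 := ⟨by linarith [hx.1, hx₀mem.1], hx.2⟩
    have hsplit : hhW W x₀ + ∫ s in x₀..x, (phiW W s)⁻¹ = hhW W x :=
      intervalIntegral.integral_add_adjacent_intervals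
        (hhW_intervalIntegrable hW hWpos (by norm_num) hx₀mem)
        (hhW_intervalIntegrable hW hWpos hx₀mem hxmem)
    rw [← hsplit]
    have hmono : ∫ s in x₀..x, ((Real.sqrt 6) * (1 - s))⁻¹ ≤ ∫ s in x₀..x, (phiW W s)⁻¹ := by
      apply intervalIntegral.integral_mono_on hx.1.le
      · apply ContinuousOn.intervalIntegrable
        apply ContinuousOn.inv₀
        · fun_prop
        · intro t ht
          rw [Set.uIcc_of_le hx.1.le] at ht
          have : (0:ℝ) < 1 - t := by linarith [ht.2, hx.2]
          positivity
      · exact hhW_intervalIntegrable hW hWpos hx₀mem hxmem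
      · intro s hs
        have hsmem : s ∈ Set.Ioo (-1:ℝ) 1 :=
          ⟨by linarith [hs.1, hx₀mem.1], by linarith [hs.2, hx.2]⟩
        have h1s : (0:ℝ) < 1 - s := by linarith [hsmem.2]
        apply inv_anti₀ (phiW_pos hWpos hsmem)
        -- phiW W s ≤ √6 * (1 - s)
        have hWb : W s ≤ 3 * (1 - s)^2 := hbd s (by linarith [hs.1]) hsmem.2
        have : phiW W s ≤ Real.sqrt (6 * (1 - s)^2) := by
          apply Real.sqrt_le_sqrt; linarith
        calc phiW W s ≤ Real.sqrt (6 * (1 - s)^2) := this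
          _ = Real.sqrt 6 * (1 - s) := by
              rw [Real.sqrt_mul (by norm_num), Real.sqrt_sq h1s.le]
    calc hhW W x₀ + (Real.sqrt 6)⁻¹ * (Real.log (1 - x₀) - Real.log (1 - x))
        = hhW W x₀ + ∫ s in x₀..x, ((Real.sqrt 6) * (1 - s))⁻¹ := by
          rw [log_integral_right hx.1.le hx.2]
      _ ≤ hhW W x₀ + ∫ s in x₀..x, (phiW W s)⁻¹ := by linarith [hmono]
  -- the lower bound tends to atTop
  have htend : Tendsto (fun x => hhW W x₀ + (Real.sqrt 6)⁻¹ *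
      (Real.log (1 - x₀) - Real.log (1 - x))) (nhdsWithin 1 (Set.Iio 1)) atTop := by
    apply tendsto_atTop_add_const_left
    apply Tendsto.const_mul_atTop (by positivity : (0:ℝ) < (Real.sqrt 6)⁻¹)
    apply tendsto_atTop_add_const_left
    have h1 : Tendsto (fun x : ℝ => 1 - x) (nhdsWithin 1 (Set.Iio 1)) (nhdsWithin 0 (Set.Ioi 0)) := by
      apply tendsto_nhdsWithin_of_tendsto_nhds_of_eventually_within
      · have hcont : Continuous (fun x : ℝ => 1 - x) := by continuity
        have hc : Tendsto (fun x : ℝ => 1 - x) (nhds 1) (nhds 0) := by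
          simpa using hcont.tendsto 1
        exact hc.mono_left nhdsWithin_le_nhds
      · filter_upwards [self_mem_nhdsWithin] with x hx
        simp only [Set.mem_Iio] at hx
        simp [Set.mem_Ioi]; linarith
    have := Real.tendsto_log_nhdsGT_zero.comp h1
    exact tendsto_neg_atBot_atTop.comp this
  apply tendsto_atTop_mono' _ _ htend
  filter_upwards [Ioo_mem_nhdsLT_of_mem (by constructor <;> [exact hx₀mem.2; norm_num] :
    (1:ℝ) ∈ Set.Ioc x₀ 1)] with x hx
  exact hlow x hx

lemma W_quad_bound_left (hW : ContDiff ℝ 2 W)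
    (hWpos : ∀ s ∈ Set.Ioo (-1:ℝ) 1, 0 < W s)
    (hWm1 : W (-1) = 0) (hWm1' : deriv W (-1) = 0) (hWm1'' : iteratedDeriv 2 W (-1) = 2) :
    ∃ δ : ℝ, 0 < δ ∧ δ ≤ 1 ∧ ∀ s, -1 < s → s ≤ -1 + δ → W s ≤ 3 * (1 + s)^2 := by
  obtain ⟨hWd, hWd', hWcont''⟩ := W_diff_facts hW
  have h2 : deriv (deriv W) (-1) = 2 := by
    rw [← hWm1'']; rw [iteratedDeriv_succ, iteratedDeriv_one]
  have hev : ∀ᶠ c in nhds (-1:ℝ), deriv (deriv W) c < 3 := by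
    have := hWcont''.continuousAt (x := -1)
    exact this.eventually_lt continuousAt_const (by rw [h2]; norm_num)
  obtain ⟨ε, hε, hball⟩ := Metric.eventually_nhds_iff_ball.1 hev
  refine ⟨min 1 (ε/2), by positivity, min_le_left _ _, ?_⟩
  intro s hsm1 hs
  have hsmem : s ∈ Set.Ioo (-1:ℝ) 1 := by
    refine ⟨hsm1, ?_⟩
    have : min 1 (ε/2) ≤ 1 := min_le_left _ _
    linarith
  have hWs : 0 < W s := hWpos s hsmem
  obtain ⟨c₁, hc₁, e₁⟩ := exists_deriv_eq_slope W hsm1 hWd.continuous.continuousOn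
    hWd.differentiableOn
  obtain ⟨c₂, hc₂, e₂⟩ := exists_deriv_eq_slope (deriv W) hc₁.1 hWd'.continuous.continuousOn
    hWd'.differentiableOn
  rw [hWm1] at e₁
  rw [hWm1'] at e₂
  have h1s : (0:ℝ) < 1 + s := by linarith
  have h1c₁ : (0:ℝ) < 1 + c₁ := by linarith [hc₁.1]
  have e₁' : deriv W c₁ * (1 + s) = W s := by
    rw [e₁]
    rw [div_mul_eq_mul_div, div_eq_iff (by linarith : s - -1 ≠ 0)]
    ring
  have e₂' : deriv (deriv W) c₂ * (1 + c₁) = deriv W c₁ := by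
    rw [e₂]
    rw [div_mul_eq_mul_div, div_eq_iff (by linarith : c₁ - -1 ≠ 0)]
    ring
  have hc₂3 : deriv (deriv W) c₂ < 3 := by
    apply hball
    rw [Metric.mem_ball, Real.dist_eq, abs_lt]
    have hm : min 1 (ε/2) ≤ ε/2 := min_le_right _ _
    constructor
    · linarith [hc₂.1]
    · have : c₂ < c₁ := hc₂.2
      have : c₁ < s := hc₁.2
      linarith
  have key : W s = deriv (deriv W) c₂ * ((1 + c₁) * (1 + s)) := by
    nlinarith [e₁', e₂']
  have hmono : 1 + c₁ ≤ 1 + s := by linarith [hc₁.2]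
  nlinarith [key, hc₂3, mul_pos h1c₁ h1s, hWs]

lemma log_integral_left {a b : ℝ} (hab : a ≤ b) (ha : -1 < a) :
    ∫ s in a..b, ((Real.sqrt 6) * (1 + s))⁻¹
      = (Real.sqrt 6)⁻¹ * (Real.log (1 + b) - Real.log (1 + a)) := by
  have key : ∀ t ∈ Set.uIcc a b,
      HasDerivAt (fun s => (Real.sqrt 6)⁻¹ * Real.log (1 + s))
        ((Real.sqrt 6 * (1 + t))⁻¹) t := by
    intro t ht
    rw [Set.uIcc_of_le hab] at ht
    have ht1 : (0:ℝ) < 1 + t := by linarith [ht.1]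
    have h1 : HasDerivAt (fun s : ℝ => 1 + s) 1 t := by
      exact (hasDerivAt_id' t).const_add 1
    have h2 : HasDerivAt (fun s => Real.log (1 + s)) ((1 + t)⁻¹ * 1) t :=
      (Real.hasDerivAt_log ht1.ne').comp t h1
    have h3 := h2.const_mul ((Real.sqrt 6)⁻¹)
    refine h3.congr_deriv (Eq.symm ?_)
    field_simp
  rw [intervalIntegral.integral_eq_sub_of_hasDerivAt key]
  · ring
  · apply ContinuousOn.intervalIntegrable
    apply ContinuousOn.inv₀
    · fun_prop
    · intro t ht
      rw [Set.uIcc_of_le hab] at ht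
      have : (0:ℝ) < 1 + t := by linarith [ht.1]
      positivity

lemma hhW_tendsto_atBot (hW : ContDiff ℝ 2 W) (hWpos : ∀ s ∈ Set.Ioo (-1:ℝ) 1, 0 < W s)
    (hquad : ∃ δ : ℝ, 0 < δ ∧ δ ≤ 1 ∧ ∀ s, -1 < s → s ≤ -1 + δ → W s ≤ 3 * (1 + s)^2) :
    Tendsto (hhW W) (nhdsWithin (-1) (Set.Ioi (-1))) atBot := by
  obtain ⟨δ, hδ, hδ1, hbd⟩ := hquad
  set x₀ : ℝ := -1 + δ with hx₀def
  have hx₀mem : x₀ ∈ Set.Ioo (-1:ℝ) 1 := ⟨by simp [hx₀def]; linarith, by simp [hx₀def]; linarith⟩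
  have h6 : (0:ℝ) < Real.sqrt 6 := Real.sqrt_pos.2 (by norm_num)
  have hupp : ∀ x ∈ Set.Ioo (-1:ℝ) x₀,
      hhW W x ≤ hhW W x₀ + (Real.sqrt 6)⁻¹ * (Real.log (1 + x) - Real.log (1 + x₀)) := by
    intro x hx
    have hxmem : x ∈ Set.Ioo (-1:ℝ) 1 := ⟨hx.1, by linarith [hx.2, hx₀mem.2]⟩
    have hsplit : hhW W x + ∫ s in x..x₀, (phiW W s)⁻¹ = hhW W x₀ :=
      intervalIntegral.integral_add_adjacent_intervals
        (hhW_intervalIntegrable hW hWpos (by norm_num) hxmem)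
        (hhW_intervalIntegrable hW hWpos hxmem hx₀mem)
    have hmono : ∫ s in x..x₀, ((Real.sqrt 6) * (1 + s))⁻¹ ≤ ∫ s in x..x₀, (phiW W s)⁻¹ := by
      apply intervalIntegral.integral_mono_on hx.2.le
      · apply ContinuousOn.intervalIntegrable
        apply ContinuousOn.inv₀
        · fun_prop
        · intro t ht
          rw [Set.uIcc_of_le hx.2.le] at ht
          have : (0:ℝ) < 1 + t := by linarith [ht.1, hx.1]
          positivity
      · exact hhW_intervalIntegrable hW hWpos hxmem hx₀mem
      · intro s hs
        have hsmem : s ∈ Set.Ioo (-1:ℝ) 1 :=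
          ⟨by linarith [hs.1, hx.1], by linarith [hs.2, hx₀mem.2]⟩
        have h1s : (0:ℝ) < 1 + s := by linarith [hsmem.1]
        apply inv_anti₀ (phiW_pos hWpos hsmem)
        have hWb : W s ≤ 3 * (1 + s)^2 := hbd s hsmem.1 (by linarith [hs.2])
        calc phiW W s ≤ Real.sqrt (6 * (1 + s)^2) := by
              apply Real.sqrt_le_sqrt; linarith
          _ = Real.sqrt 6 * (1 + s) := by
              rw [Real.sqrt_mul (by norm_num), Real.sqrt_sq h1s.le]
    have hlog : ∫ s in x..x₀, ((Real.sqrt 6) * (1 + s))⁻¹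
        = (Real.sqrt 6)⁻¹ * (Real.log (1 + x₀) - Real.log (1 + x)) :=
      log_integral_left hx.2.le hx.1
    have : hhW W x = hhW W x₀ - ∫ s in x..x₀, (phiW W s)⁻¹ := by linarith [hsplit]
    rw [this]
    rw [hlog] at hmono
    linarith [hmono]
  have htend : Tendsto (fun x => hhW W x₀ + (Real.sqrt 6)⁻¹ *
      (Real.log (1 + x) - Real.log (1 + x₀))) (nhdsWithin (-1) (Set.Ioi (-1))) atBot := by
    apply tendsto_atBot_add_const_left
    rw [show (fun x : ℝ => (Real.sqrt 6)⁻¹ * (Real.log (1 + x) - Real.log (1 + x₀)))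
      = (fun x : ℝ => (Real.sqrt 6)⁻¹ * Real.log (1 + x) + -((Real.sqrt 6)⁻¹ * Real.log (1 + x₀)))
      by funext x; ring]
    apply tendsto_atBot_add_const_right
    apply Tendsto.const_mul_atBot (by positivity : (0:ℝ) < (Real.sqrt 6)⁻¹)
    have h1 : Tendsto (fun x : ℝ => 1 + x) (nhdsWithin (-1) (Set.Ioi (-1)))
        (nhdsWithin 0 (Set.Ioi 0)) := by
      apply tendsto_nhdsWithin_of_tendsto_nhds_of_eventually_within
      · have hcont : Continuous (fun x : ℝ => 1 + x) := by continuity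
        have hc : Tendsto (fun x : ℝ => 1 + x) (nhds (-1)) (nhds 0) := by
          simpa using hcont.tendsto (-1)
        exact hc.mono_left nhdsWithin_le_nhds
      · filter_upwards [self_mem_nhdsWithin] with x hx
        simp only [Set.mem_Ioi] at hx
        simp [Set.mem_Ioi]; linarith
    exact Real.tendsto_log_nhdsGT_zero.comp h1
  apply tendsto_atBot_mono' _ _ htend
  filter_upwards [Ioo_mem_nhdsGT_of_mem (by constructor <;> [norm_num; exact hx₀mem.1] :
    (-1:ℝ) ∈ Set.Ico (-1) x₀)] with x hx
  exact hupp x hx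



lemma exists_sol (hW : ContDiff ℝ 2 W)
    (hWpos : ∀ s ∈ Set.Ioo (-1:ℝ) 1, 0 < W s)
    (hWm1 : W (-1) = 0) (hWp1 : W 1 = 0)
    (hWm1' : deriv W (-1) = 0) (hWp1' : deriv W 1 = 0)
    (hWm1'' : iteratedDeriv 2 W (-1) = 2) (hWp1'' : iteratedDeriv 2 W 1 = 2) :
    ∃ g : ℝ → ℝ, (ContDiff ℝ 2 g ∧ g 0 = 0 ∧
      (∀ t, deriv (deriv g) t = deriv W (g t)) ∧
      Filter.Tendsto g Filter.atTop (nhds 1) ∧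
      Filter.Tendsto g Filter.atBot (nhds (-1))) ∧
      (∀ t, g t ∈ Set.Ioo (-1:ℝ) 1 ∧ hhW W (g t) = t) := by
  obtain ⟨hWd, hWd', hWcont''⟩ := W_diff_facts hW
  have hmono := hhW_strictMonoOn hW hWpos
  have htop := hhW_tendsto_atTop hW hWpos (W_quad_bound_right hW hWpos hWp1 hWp1' hWp1'')
  have hbot := hhW_tendsto_atBot hW hWpos (W_quad_bound_left hW hWpos hWm1 hWm1' hWm1'')
  have h00 : hhW W 0 = 0 := intervalIntegral.integral_same
  have hIoo0 : (0:ℝ) ∈ Set.Ioo (-1:ℝ) 1 := by norm_num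
  -- surjectivity
  have hsurj : ∀ t : ℝ, ∃ x, x ∈ Set.Ioo (-1:ℝ) 1 ∧ hhW W x = t := by
    intro t
    have hIooTop : Set.Ioo (-1:ℝ) 1 ∈ nhdsWithin (1:ℝ) (Set.Iio 1) :=
      Ioo_mem_nhdsLT_of_mem (by norm_num : (1:ℝ) ∈ Set.Ioc (-1:ℝ) 1)
    have hIooBot : Set.Ioo (-1:ℝ) 1 ∈ nhdsWithin (-1:ℝ) (Set.Ioi (-1)) :=
      Ioo_mem_nhdsGT_of_mem (by norm_num : (-1:ℝ) ∈ Set.Ico (-1:ℝ) 1)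
    have hevp : ∀ᶠ x in nhdsWithin (1:ℝ) (Set.Iio 1), t ≤ hhW W x ∧ x ∈ Set.Ioo (-1:ℝ) 1 :=
      (htop.eventually (eventually_ge_atTop t)).and (eventually_mem_set.2 hIooTop)
    obtain ⟨xp, hxpge, hxpIoo⟩ := hevp.exists
    have hevm : ∀ᶠ x in nhdsWithin (-1:ℝ) (Set.Ioi (-1)), hhW W x ≤ t ∧ x ∈ Set.Ioo (-1:ℝ) 1 :=
      (hbot.eventually (eventually_le_atBot t)).and (eventually_mem_set.2 hIooBot)
    obtain ⟨xm, hxmle, hxmIoo⟩ := hevm.exists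
    have hsub : Set.uIcc xm xp ⊆ Set.Ioo (-1:ℝ) 1 :=
      (Set.ordConnected_Ioo).uIcc_subset hxmIoo hxpIoo
    have hconth : ContinuousOn (hhW W) (Set.uIcc xm xp) := fun x hx =>
      ((hhW_hasDerivAt hW hWpos (hsub hx)).continuousAt).continuousWithinAt
    have hmem : t ∈ Set.uIcc (hhW W xm) (hhW W xp) := Set.mem_uIcc.2 (Or.inl ⟨hxmle, hxpge⟩)
    obtain ⟨x, hx, hxeq⟩ := intermediate_value_uIcc hconth hmem
    exact ⟨x, hsub hx, hxeq⟩
  choose g hgIoo hgEq using hsurj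
  -- g 0 = 0
  have hg0 : g 0 = 0 := hmono.injOn (hgIoo 0) hIoo0 (by rw [hgEq, h00])
  -- order-reflecting
  have hreflect : ∀ {x : ℝ} {s : ℝ}, hhW W x < s → x ∈ Set.Ioo (-1:ℝ) 1 → x < g s := by
    intro x s hxs hxIoo
    by_contra hle
    push_neg at hle
    have := hmono.monotoneOn (hgIoo s) hxIoo hle
    rw [hgEq] at this
    linarith
  have hreflect' : ∀ {x : ℝ} {s : ℝ}, s < hhW W x → x ∈ Set.Ioo (-1:ℝ) 1 → g s < x := by
    intro x s hxs hxIoo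
    by_contra hle
    push_neg at hle
    have := hmono.monotoneOn hxIoo (hgIoo s) hle
    rw [hgEq] at this
    linarith
  -- continuity of g
  have hgcont : ∀ t, ContinuousAt g t := by
    intro t
    rw [Metric.continuousAt_iff]
    intro ε hε
    obtain ⟨hgt1, hgt2⟩ := hgIoo t
    set ε' : ℝ := min ε (min ((1 - g t)/2) ((g t + 1)/2)) with hε'def
    have hε' : 0 < ε' := by
      apply lt_min hε
      apply lt_min <;> linarith
    have hup : g t + ε' ∈ Set.Ioo (-1:ℝ) 1 := by
      have h1 : ε' ≤ (1 - g t)/2 := le_trans (min_le_right _ _) (min_le_left _ _)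
      constructor <;> [linarith; linarith]
    have hdn : g t - ε' ∈ Set.Ioo (-1:ℝ) 1 := by
      have h1 : ε' ≤ (g t + 1)/2 := le_trans (min_le_right _ _) (min_le_right _ _)
      constructor <;> [linarith; linarith]
    have hlt1 : hhW W (g t - ε') < t := by
      have := hmono hdn (hgIoo t) (by linarith)
      rwa [hgEq] at this
    have hlt2 : t < hhW W (g t + ε') := by
      have := hmono (hgIoo t) hup (by linarith)
      rwa [hgEq] at this
    refine ⟨min (t - hhW W (g t - ε')) (hhW W (g t + ε') - t), by
      apply lt_min <;> linarith, ?_⟩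
    intro s hs
    rw [Real.dist_eq, abs_lt] at hs
    have hs1 : hhW W (g t - ε') < s := by
      have := min_le_left (t - hhW W (g t - ε')) (hhW W (g t + ε') - t)
      linarith [hs.1]
    have hs2 : s < hhW W (g t + ε') := by
      have := min_le_right (t - hhW W (g t - ε')) (hhW W (g t + ε') - t)
      linarith [hs.2]
    have hlo : g t - ε' < g s := hreflect hs1 hdn
    have hhi : g s < g t + ε' := hreflect' hs2 hup
    rw [Real.dist_eq, abs_lt]
    have : ε' ≤ ε := min_le_left _ _
    constructor <;> linarith
  -- derivative of g
  have hgderiv : ∀ t, HasDerivAt g (phiW W (g t)) t := by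
    intro t
    have h1 : HasDerivAt (hhW W) (phiW W (g t))⁻¹ (g t) := hhW_hasDerivAt hW hWpos (hgIoo t)
    have h2 : (phiW W (g t))⁻¹ ≠ 0 := inv_ne_zero (phiW_pos hWpos (hgIoo t)).ne'
    have h3 := HasDerivAt.of_local_left_inverse (hgcont t) h1 h2
      (Filter.Eventually.of_forall fun y => hgEq y)
    rwa [inv_inv] at h3
  have hgdiff : Differentiable ℝ g := fun t => (hgderiv t).differentiableAt
  have hderivg : deriv g = fun t => phiW W (g t) := funext fun t => (hgderiv t).deriv
  -- second derivative
  have hgderiv2 : ∀ t, HasDerivAt (deriv g) (deriv W (g t)) t := by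
    intro t
    rw [hderivg]
    have hWgt : 0 < W (g t) := hWpos _ (hgIoo t)
    have hu : HasDerivAt (fun s => 2 * W (g s)) (2 * (deriv W (g t) * phiW W (g t))) t := by
      exact (((hWd (g t)).hasDerivAt.comp t (hgderiv t))).const_mul 2
    have hsq := (Real.hasDerivAt_sqrt (by positivity : 2 * W (g t) ≠ 0)).comp t hu
    have hphi : Real.sqrt (2 * W (g t)) = phiW W (g t) := rfl
    refine hsq.congr_deriv (Eq.symm ?_)
    rw [hphi]
    have hphipos : 0 < phiW W (g t) := phiW_pos hWpos (hgIoo t)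
    have hphisq : phiW W (g t) * phiW W (g t) = 2 * W (g t) :=
      Real.mul_self_sqrt (by positivity)
    field_simp
  have hgdiff2 : Differentiable ℝ (deriv g) := fun t => (hgderiv2 t).differentiableAt
  have hderiv2g : ∀ t, deriv (deriv g) t = deriv W (g t) := fun t => (hgderiv2 t).deriv
  -- smoothness
  have hgC2 : ContDiff ℝ 2 g := by
    rw [show (2:WithTop ℕ∞) = (1:WithTop ℕ∞) + 1 from by norm_num, contDiff_succ_iff_deriv]
    refine ⟨hgdiff, by simp, ?_⟩
    rw [show (1:WithTop ℕ∞) = (0:WithTop ℕ∞) + 1 from rfl, contDiff_succ_iff_deriv]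
    refine ⟨hgdiff2, by simp, ?_⟩
    rw [contDiff_zero]
    have : deriv (deriv g) = fun t => deriv W (g t) := funext hderiv2g
    rw [this]
    exact hWd'.continuous.comp hgdiff.continuous
  -- limits
  have hgtop : Tendsto g atTop (nhds 1) := by
    rw [tendsto_order]
    constructor
    · intro a ha
      have hx : max a 0 ∈ Set.Ioo (-1:ℝ) 1 :=
        ⟨by have := le_max_right a 0; linarith, max_lt ha one_pos⟩
      filter_upwards [eventually_gt_atTop (hhW W (max a 0))] with s hs
      exact lt_of_le_of_lt (le_max_left a 0) (hreflect hs hx)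
    · intro b hb
      filter_upwards with s
      exact lt_trans (hgIoo s).2 hb
  have hgbot : Tendsto g atBot (nhds (-1)) := by
    rw [tendsto_order]
    constructor
    · intro a ha
      filter_upwards with s
      exact lt_trans ha (hgIoo s).1
    · intro b hb
      have hx : min b 0 ∈ Set.Ioo (-1:ℝ) 1 :=
        ⟨lt_min hb (by norm_num), by have := min_le_right b 0; linarith⟩
      filter_upwards [eventually_lt_atBot (hhW W (min b 0))] with s hs
      exact lt_of_lt_of_le (hreflect' hs hx) (min_le_left b 0)
  exact ⟨g, ⟨hgC2, hg0, hderiv2g, hgtop, hgbot⟩, fun t => ⟨hgIoo t, hgEq t⟩⟩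

lemma sol_key (hW : ContDiff ℝ 2 W)
    (hWpos : ∀ s ∈ Set.Ioo (-1:ℝ) 1, 0 < W s)
    (hWm1 : W (-1) = 0) (hWp1 : W 1 = 0)
    (hWm1' : deriv W (-1) = 0) (hWp1' : deriv W 1 = 0)
    {g : ℝ → ℝ} (hgC2 : ContDiff ℝ 2 g) (hg0 : g 0 = 0)
    (hgode : ∀ t, deriv (deriv g) t = deriv W (g t))
    (hgtop : Filter.Tendsto g Filter.atTop (nhds 1))
    (hgbot : Filter.Tendsto g Filter.atBot (nhds (-1))) :
    ∀ t, g t ∈ Set.Ioo (-1:ℝ) 1 ∧ deriv g t = phiW W (g t) ∧ 0 < deriv g t := by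
  obtain ⟨hWd, hWd', hWcont''⟩ := W_diff_facts hW
  obtain ⟨hgd, hgd', hgcont''⟩ := W_diff_facts hgC2
  have hgcont : Continuous g := hgd.continuous
  have hg'cont : Continuous (deriv g) := hgd'.continuous
  -- energy is constant
  set E : ℝ → ℝ := fun t => (deriv g t)^2 - 2 * W (g t) with hEdef
  have hEderiv : ∀ t, HasDerivAt E 0 t := by
    intro t
    have hd1 : HasDerivAt (fun t => (deriv g t)^2)
        ((2:ℕ) * (deriv g t)^1 * deriv (deriv g) t) t := ((hgd' t).hasDerivAt).pow 2
    have hd2 : HasDerivAt (fun t => 2 * W (g t)) (2 * (deriv W (g t) * deriv g t)) t :=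
      ((hWd (g t)).hasDerivAt.comp t (hgd t).hasDerivAt).const_mul 2
    have := hd1.sub hd2
    refine this.congr_deriv (Eq.symm ?_)
    rw [hgode t]
    push_cast
    ring
  have hEdiff : Differentiable ℝ E := fun t => (hEderiv t).differentiableAt
  obtain ⟨e, hEconst⟩ : ∃ e : ℝ, ∀ t, E t = e :=
    ⟨E 0, fun t => is_const_of_deriv_eq_zero hEdiff (fun t => (hEderiv t).deriv) t 0⟩
  -- limits of W ∘ g
  have hWgtop : Tendsto (fun t => W (g t)) atTop (nhds 0) := by
    have := (hWd.continuous.tendsto 1).comp hgtop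
    rwa [hWp1] at this
  have hsqtop : Tendsto (fun t => (deriv g t)^2) atTop (nhds e) := by
    have h1 : (fun t => (deriv g t)^2) = fun t => E t + 2 * W (g t) := by
      funext t; simp only [hEdef]; ring
    rw [h1]
    have h2 : Tendsto E atTop (nhds e) := by
      have : E = fun _ => e := funext fun t => hEconst t
      rw [this]; exact tendsto_const_nhds
    have := h2.add ((hWgtop.const_mul 2))
    simpa using this
  have he0 : 0 ≤ e := ge_of_tendsto' hsqtop fun t => by positivity
  -- e = 0
  have heq0 : e = 0 := by
    by_contra hne
    have hepos : 0 < e := lt_of_le_of_ne he0 (Ne.symm hne)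
    -- eventually (deriv g t)^2 > e/2 and other conditions
    have hev : ∀ᶠ t in atTop, (deriv g t)^2 > e/2 :=
      hsqtop.eventually (eventually_gt_nhds (half_lt_self hepos))
    obtain ⟨T, hT⟩ := eventually_atTop.1 hev
    have hsqrtpos : (0:ℝ) < Real.sqrt (e/2) := Real.sqrt_pos.2 (by positivity)
    have hTne : deriv g T ≠ 0 := by
      intro h0; have h2 := hT T le_rfl; rw [h0] at h2; norm_num at h2; nlinarith
    -- sign constancy on [T, ∞)
    have hsign : ∀ t, T ≤ t → (0 < deriv g T → Real.sqrt (e/2) < deriv g t)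
        ∧ (deriv g T < 0 → deriv g t < -Real.sqrt (e/2)) := by
      intro t ht
      have hnz : ∀ s ∈ Set.Icc T t, deriv g s ≠ 0 := by
        intro s hs h0
        have h2 := hT s hs.1; rw [h0] at h2; norm_num at h2; nlinarith
      constructor
      · intro hpos
        have hgt0 : 0 < deriv g t := by
          by_contra hle
          push_neg at hle
          have h0mem : (0:ℝ) ∈ Set.Icc (deriv g t) (deriv g T) := ⟨hle, hpos.le⟩
          obtain ⟨s, hs, hs0⟩ := intermediate_value_Icc' ht (hg'cont.continuousOn) h0mem
          exact hnz s hs hs0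
        exact (Real.sqrt_lt' hgt0).2 (hT t ht)
      · intro hneg
        have hlt0 : deriv g t < 0 := by
          by_contra hle
          push_neg at hle
          have h0mem : (0:ℝ) ∈ Set.Icc (deriv g T) (deriv g t) := ⟨hneg.le, hle⟩
          obtain ⟨s, hs, hs0⟩ := intermediate_value_Icc ht (hg'cont.continuousOn) h0mem
          exact hnz s hs hs0
        have h4 := hT t ht
        have h5 : Real.sqrt (e/2) < -deriv g t := by
          rw [Real.sqrt_lt' (by linarith)]
          nlinarith
        linarith
    -- FTC lower bound and contradiction
    have hftc : ∀ t, T ≤ t → g t - g T = ∫ s in T..t, deriv g s := by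
      intro t ht
      rw [intervalIntegral.integral_deriv_eq_sub (fun x _ => hgd x)
        (hg'cont.intervalIntegrable T t)]
    rcases lt_or_gt_of_ne hTne with hneg | hpos
    · -- deriv g < -√(e/2) on [T,∞): g → -∞, contradicts g → 1 > 0
      have hub : ∀ t, T ≤ t → g t ≤ g T - (t - T) * Real.sqrt (e/2) := by
        intro t ht
        have hle : ∫ s in T..t, deriv g s ≤ ∫ s in T..t, (-Real.sqrt (e/2)) := by
          apply intervalIntegral.integral_mono_on ht (hg'cont.intervalIntegrable T t)
            intervalIntegrable_const
          intro s hs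
          exact ((hsign s hs.1).2 hneg).le
        rw [intervalIntegral.integral_const, smul_eq_mul] at hle
        have := hftc t ht
        linarith
      obtain ⟨t, hgt0, htlarge⟩ :=
        ((hgtop.eventually_const_lt (by norm_num : (0:ℝ) < 1)).and
          (eventually_ge_atTop (max T (T + g T / Real.sqrt (e/2))))).exists
      have hT' : T ≤ t := le_trans (le_max_left _ _) htlarge
      have h2' : T + g T / Real.sqrt (e/2) ≤ t := le_trans (le_max_right _ _) htlarge
      have h3' : g T ≤ (t - T) * Real.sqrt (e/2) := by
        rw [← div_le_iff₀ hsqrtpos] at *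
        linarith
      have := hub t hT'
      linarith
    · -- deriv g > √(e/2) on [T,∞): g → ∞, contradicts g → 1 < 2
      have hlb : ∀ t, T ≤ t → g T + (t - T) * Real.sqrt (e/2) ≤ g t := by
        intro t ht
        have hle : ∫ s in T..t, Real.sqrt (e/2) ≤ ∫ s in T..t, deriv g s := by
          apply intervalIntegral.integral_mono_on ht intervalIntegrable_const
            (hg'cont.intervalIntegrable T t)
          intro s hs
          exact ((hsign s hs.1).1 hpos).le
        rw [intervalIntegral.integral_const, smul_eq_mul] at hle
        have := hftc t ht
        linarith
      obtain ⟨t, hgt2, htlarge⟩ :=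
        ((hgtop.eventually_lt_const (by norm_num : (1:ℝ) < 2)).and
          (eventually_ge_atTop (max T (T + (2 - g T) / Real.sqrt (e/2))))).exists
      have hT' : T ≤ t := le_trans (le_max_left _ _) htlarge
      have h2' : T + (2 - g T) / Real.sqrt (e/2) ≤ t := le_trans (le_max_right _ _) htlarge
      have h3' : 2 - g T ≤ (t - T) * Real.sqrt (e/2) := by
        rw [← div_le_iff₀ hsqrtpos] at *
        linarith
      have := hlb t hT'
      linarith
  -- first integral: (g')² = 2 W (g t)
  have hsq : ∀ t, (deriv g t)^2 = 2 * W (g t) := by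
    intro t
    have := hEconst t
    rw [heq0] at this
    simp only [hEdef] at this
    linarith
  -- g never hits a zero of (W, W') other than allowed
  have hclopen : ∀ a : ℝ, W a = 0 → deriv W a = 0 → a ≠ 0 → ∀ t₀, g t₀ ≠ a := by
    intro a hWa hW'a ha t₀ hgt₀
    have hd0 : deriv g t₀ = 0 := by
      have h1 := hsq t₀
      rw [hgt₀, hWa] at h1
      have : deriv g t₀ ^ 2 = 0 := by linarith
      exact pow_eq_zero_iff (by norm_num) |>.1 this
    -- ODE uniqueness: the set S is clopen
    set v : ℝ × ℝ → ℝ × ℝ := fun p => (p.2, deriv W p.1) with hvdef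
    have hW'C1 : ContDiff ℝ 1 (deriv W) := by
      have h2 : ContDiff ℝ ((1:ℕ) + 1) W := by norm_num; exact hW
      rw [contDiff_succ_iff_deriv] at h2
      exact h2.2.2
    have hvC1 : ContDiff ℝ 1 v := contDiff_snd.prodMk (hW'C1.comp contDiff_fst)
    set S : Set ℝ := {t | g t = a} ∩ {t | deriv g t = 0} with hSdef
    have hSclosed : IsClosed S :=
      (isClosed_eq hgcont continuous_const).inter (isClosed_eq hg'cont continuous_const)
    have hSopen : IsOpen S := by
      rw [isOpen_iff_mem_nhds]
      intro s₀ hs₀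
      obtain ⟨hgs₀, hds₀⟩ := hs₀
      simp only [Set.mem_setOf_eq] at hgs₀ hds₀
      obtain ⟨K, U, hU, hlip⟩ := (hvC1.contDiffAt (x := ((a:ℝ), (0:ℝ)))).exists_lipschitzOnWith
      set F : ℝ → ℝ × ℝ := fun t => (g t, deriv g t) with hFdef
      set C : ℝ → ℝ × ℝ := fun _ => ((a:ℝ), (0:ℝ)) with hCdef
      have hFs₀ : F s₀ = ((a:ℝ), (0:ℝ)) := by simp [hFdef, hgs₀, hds₀]
      have hFcont : Continuous F := hgcont.prodMk hg'cont
      have hmemU : ∀ᶠ t in nhds s₀, F t ∈ U := hFcont.continuousAt.eventually_mem (hFs₀ ▸ hU)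
      have hFderiv : ∀ t, HasDerivAt F (v (F t)) t := by
        intro t
        have h1 := (hgd t).hasDerivAt.prodMk (hgd' t).hasDerivAt
        have h2 : v (F t) = (deriv g t, deriv (deriv g) t) := by
          simp [hvdef, hFdef, hgode t]
        rw [h2]
        exact h1
      have hCderiv : ∀ t, HasDerivAt C (v (C t)) t := by
        intro t
        have h2 : v (C t) = (0, 0) := by simp [hvdef, hCdef, hW'a]
        rw [h2]
        exact hasDerivAt_const _ _
      have huniq := ODE_solution_unique_of_eventually (v := fun _ => v) (s := fun _ => U)
        (Filter.Eventually.of_forall fun _ => hlip)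
        (hmemU.mono fun t ht => ⟨hFderiv t, ht⟩)
        (Filter.Eventually.of_forall fun t => ⟨hCderiv t, mem_of_mem_nhds hU⟩)
        (by rw [hFs₀])
      filter_upwards [huniq] with t ht
      have h3 : g t = a ∧ deriv g t = 0 := by
        have := Prod.ext_iff.1 ht
        exact ⟨this.1, this.2⟩
      exact ⟨h3.1, h3.2⟩
    have hSuniv : S = Set.univ := IsClopen.eq_univ ⟨hSclosed, hSopen⟩ ⟨t₀, hgt₀, hd0⟩
    have h0S : (0:ℝ) ∈ S := hSuniv ▸ Set.mem_univ 0
    exact ha (by rw [← hg0]; exact (h0S.1).symm)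
  have hne1 : ∀ t, g t ≠ 1 := hclopen 1 hWp1 hWp1' (by norm_num)
  have hnem1 : ∀ t, g t ≠ -1 := hclopen (-1) hWm1 hWm1' (by norm_num)
  -- g stays in (-1, 1)
  have hIoo : ∀ t, g t ∈ Set.Ioo (-1:ℝ) 1 := by
    intro t
    constructor
    · by_contra hle
      push_neg at hle
      have hmem : (-1:ℝ) ∈ Set.uIcc (g t) (g 0) := by
        rw [hg0, Set.mem_uIcc]
        left; exact ⟨hle, by norm_num⟩
      obtain ⟨s, _, hs⟩ := intermediate_value_uIcc (hgcont.continuousOn) hmem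
      exact hnem1 s hs
    · by_contra hle
      push_neg at hle
      have hmem : (1:ℝ) ∈ Set.uIcc (g 0) (g t) := by
        rw [hg0, Set.mem_uIcc]
        left; exact ⟨by norm_num, hle⟩
      obtain ⟨s, _, hs⟩ := intermediate_value_uIcc (hgcont.continuousOn) hmem
      exact hne1 s hs
  -- deriv g is nonvanishing
  have hne0 : ∀ t, deriv g t ≠ 0 := by
    intro t h0
    have h1 := hsq t
    rw [h0] at h1
    have := hWpos _ (hIoo t)
    norm_num at h1
    linarith
  -- deriv g is positive somewhere
  obtain ⟨A, hgA, hApos⟩ :=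
    ((hgtop.eventually_const_lt (by norm_num : (0:ℝ) < 1)).and (eventually_gt_atTop 0)).exists
  obtain ⟨c, hc, hcslope⟩ := exists_deriv_eq_slope g hApos hgcont.continuousOn
    hgd.differentiableOn
  have hcpos : 0 < deriv g c := by
    rw [hcslope, hg0]
    apply div_pos <;> linarith [hgA, hApos]
  -- deriv g positive everywhere
  have hpos : ∀ t, 0 < deriv g t := by
    intro t
    rcases lt_or_gt_of_ne (hne0 t) with hlt | hgt
    · exfalso
      have hmem : (0:ℝ) ∈ Set.uIcc (deriv g t) (deriv g c) :=
        Set.mem_uIcc.2 (Or.inl ⟨hlt.le, hcpos.le⟩)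
      obtain ⟨s, _, hs⟩ := intermediate_value_uIcc (hg'cont.continuousOn) hmem
      exact hne0 s hs
    · exact hgt
  intro t
  refine ⟨hIoo t, ?_, hpos t⟩
  rw [show phiW W (g t) = Real.sqrt (2 * W (g t)) from rfl, ← hsq t,
    Real.sqrt_sq (hpos t).le]
end

theorem stmt_0 (W : ℝ → ℝ) (hW : ContDiff ℝ 2 W)
    (hWpos : ∀ s ∈ Set.Ioo (-1:ℝ) 1, 0 < W s)
    (hWm1 : W (-1) = 0) (hWp1 : W 1 = 0)
    (hWm1' : deriv W (-1) = 0) (hWp1' : deriv W 1 = 0)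
    (hWm1'' : iteratedDeriv 2 W (-1) = 2) (hWp1'' : iteratedDeriv 2 W 1 = 2)
    (hW0 : deriv W 0 = 0)
    (hWuniq : ∀ s ∈ Set.Ioo (-1:ℝ) 1, deriv W s = 0 → s = 0) :
    (∃! g : ℝ → ℝ, ContDiff ℝ 2 g ∧ g 0 = 0 ∧
      (∀ t, deriv (deriv g) t = deriv W (g t)) ∧
      Filter.Tendsto g Filter.atTop (nhds 1) ∧
      Filter.Tendsto g Filter.atBot (nhds (-1))) ∧
    (∀ g : ℝ → ℝ, (ContDiff ℝ 2 g ∧ g 0 = 0 ∧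
      (∀ t, deriv (deriv g) t = deriv W (g t)) ∧
      Filter.Tendsto g Filter.atTop (nhds 1) ∧
      Filter.Tendsto g Filter.atBot (nhds (-1))) →
      ∀ t, deriv g t = Real.sqrt (2 * W (g t)) ∧ 0 < deriv g t) := by
  obtain ⟨g₀, hP₀, hExtra⟩ := exists_sol hW hWpos hWm1 hWp1 hWm1' hWp1' hWm1'' hWp1''
  have hmono := hhW_strictMonoOn hW hWpos
  have h00 : hhW W 0 = 0 := intervalIntegral.integral_same
  have huniq : ∀ g : ℝ → ℝ, (ContDiff ℝ 2 g ∧ g 0 = 0 ∧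
      (∀ t, deriv (deriv g) t = deriv W (g t)) ∧
      Filter.Tendsto g Filter.atTop (nhds 1) ∧
      Filter.Tendsto g Filter.atBot (nhds (-1))) → g = g₀ := by
    rintro g ⟨hgC2, hg0, hgode, hgtop, hgbot⟩
    have hkey := sol_key hW hWpos hWm1 hWp1 hWm1' hWp1' hgC2 hg0 hgode hgtop hgbot
    obtain ⟨hgd, hgd', _⟩ := W_diff_facts hgC2
    have hFd : ∀ t, HasDerivAt (fun t => hhW W (g t) - t) 0 t := by
      intro t
      have h1 : HasDerivAt (hhW W) (phiW W (g t))⁻¹ (g t) := hhW_hasDerivAt hW hWpos (hkey t).1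
      have h2 : HasDerivAt g (deriv g t) t := (hgd t).hasDerivAt
      have h3 := (h1.comp t h2).sub (hasDerivAt_id t)
      refine h3.congr_deriv (Eq.symm ?_)
      rw [(hkey t).2.1]
      have hφ : phiW W (g t) ≠ 0 := (phiW_pos hWpos (hkey t).1).ne'
      rw [inv_mul_cancel₀ hφ]
      ring
    have hFconst : ∀ t, hhW W (g t) - t = hhW W (g 0) - 0 := fun t =>
      is_const_of_deriv_eq_zero (fun t => (hFd t).differentiableAt)
        (fun t => (hFd t).deriv) t 0
    have hgEq : ∀ t, hhW W (g t) = t := by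
      intro t
      have := hFconst t
      rw [hg0, h00] at this
      linarith
    funext t
    exact hmono.injOn (hkey t).1 (hExtra t).1 (by rw [hgEq t, (hExtra t).2])
  refine ⟨⟨g₀, hP₀, huniq⟩, ?_⟩
  intro g hPg t
  have hkey := sol_key hW hWpos hWm1 hWp1 hWm1' hWp1' hPg.1 hPg.2.1 hPg.2.2.1
    hPg.2.2.2.1 hPg.2.2.2.2
  exact ⟨(hkey t).2.1, (hkey t).2.2⟩
end

section
/- Let Σ be a smooth properly embedded curve in ℝ², diffeomorphic to [0,∞), with arc-length parametrization X : [0,∞) → ℝ², such that |X''(t)| ≤ C |X(t)|^{−8/7} for all large t (where |X(t)| → ∞). Then there exists a constant c > 0 such that |X(t)| ≥ c t for all large t. -/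
open Real Filter MeasureTheory Metric Set Topology

theorem stmt_13 (X : ℝ → EuclideanSpace ℝ (Fin 2)) (hX : ContDiff ℝ 2 X)
    (harc : ∀ t : ℝ, 0 ≤ t → ‖deriv X t‖ = 1)
    (hinf : Filter.Tendsto (fun t => ‖X t‖) Filter.atTop Filter.atTop)
    (C : ℝ) (hC : 0 < C) (T₀ : ℝ)
    (hcurv : ∀ t ≥ T₀, ‖deriv (deriv X) t‖ ≤ C * ‖X t‖ ^ (-(8:ℝ)/7)) :
    ∃ c > (0:ℝ), ∃ T₁ : ℝ, ∀ t ≥ T₁, c * t ≤ ‖X t‖ := by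
  have hd1 : Differentiable ℝ X := hX.differentiable (by norm_num)
  have hX2 : ContDiff ℝ (1 + 1) X := by exact_mod_cast hX
  have hd2 : Differentiable ℝ (deriv X) :=
    ((contDiff_succ_iff_deriv.mp hX2).2.2).differentiable (by norm_num)
  -- choose T₂ from hinf
  obtain ⟨T₂, hT₂⟩ := eventually_atTop.mp (hinf.eventually_ge_atTop (max ((2*C)^7) 1))
  set T : ℝ := max T₀ (max T₂ 0) with hT
  have hT0 : (0:ℝ) ≤ T := le_trans (le_max_right T₂ 0) (le_max_right _ _)
  have hnorm : ∀ t, T ≤ t → max ((2*C)^7) 1 ≤ ‖X t‖ := fun t ht =>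
    hT₂ t (le_trans (le_trans (le_max_left T₂ 0) (le_max_right _ _)) ht)
  -- inner product bound on X'' against X
  have hin : ∀ t, T ≤ t → -(1/2 : ℝ) ≤ (inner ℝ (deriv (deriv X) t) (X t) : ℝ) := by
    intro t ht
    have hr1 : (1:ℝ) ≤ ‖X t‖ := le_trans (le_max_right _ _) (hnorm t ht)
    have hr0 : (0:ℝ) < ‖X t‖ := lt_of_lt_of_le one_pos hr1
    have hr7 : (2*C)^7 ≤ ‖X t‖ := le_trans (le_max_left _ _) (hnorm t ht)
    have habs : |(inner ℝ (deriv (deriv X) t) (X t) : ℝ)| ≤ ‖deriv (deriv X) t‖ * ‖X t‖ :=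
      abs_real_inner_le_norm _ _
    have hcc : ‖deriv (deriv X) t‖ ≤ C * ‖X t‖ ^ (-(8:ℝ)/7) :=
      hcurv t (le_trans (le_max_left _ _) ht)
    have hmul : ‖X t‖ ^ (-(8:ℝ)/7) * ‖X t‖ = ‖X t‖ ^ (-(1:ℝ)/7) := by
      nth_rewrite 2 [← Real.rpow_one ‖X t‖]
      rw [← Real.rpow_add hr0]; norm_num
    have hs : 2*C ≤ ‖X t‖ ^ ((1:ℝ)/7) := by
      have h1 : ((2*C)^7 : ℝ) ^ ((1:ℝ)/7) ≤ ‖X t‖ ^ ((1:ℝ)/7) :=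
        Real.rpow_le_rpow (by positivity) hr7 (by norm_num)
      have h2 : ((2*C)^7 : ℝ) ^ ((1:ℝ)/7) = 2*C := by
        rw [← Real.rpow_natCast (2*C) 7, ← Real.rpow_mul (by positivity)]
        norm_num
      linarith [h1, h2.symm ▸ h1]
    have hfin : C * ‖X t‖ ^ (-(8:ℝ)/7) * ‖X t‖ ≤ 1/2 := by
      rw [mul_assoc, hmul, show (-(1:ℝ)/7) = -((1:ℝ)/7) by ring, Real.rpow_neg hr0.le]
      have hspos : (0:ℝ) < ‖X t‖ ^ ((1:ℝ)/7) := Real.rpow_pos_of_pos hr0 _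
      nlinarith [mul_nonneg (sub_nonneg.mpr hs) (inv_pos.mpr hspos).le,
        mul_inv_cancel₀ hspos.ne', inv_pos.mpr hspos, hC]
    have : ‖deriv (deriv X) t‖ * ‖X t‖ ≤ 1/2 :=
      le_trans (mul_le_mul_of_nonneg_right hcc (norm_nonneg _)) hfin
    have := abs_le.mp (le_trans habs this)
    linarith [this.1]
  -- derivative setup
  set g : ℝ → ℝ := fun t => (inner ℝ (X t) (X t) : ℝ) with hgdef
  set g1 : ℝ → ℝ := fun t =>
    (inner ℝ (X t) (deriv X t) : ℝ) + (inner ℝ (deriv X t) (X t) : ℝ) with hg1def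
  have hg : ∀ t, HasDerivAt g (g1 t) t := fun t =>
    (hd1 t).hasDerivAt.inner ℝ (hd1 t).hasDerivAt
  set g2 : ℝ → ℝ := fun t =>
    ((inner ℝ (X t) (deriv (deriv X) t) : ℝ) + (inner ℝ (deriv X t) (deriv X t) : ℝ)) +
    ((inner ℝ (deriv X t) (deriv X t) : ℝ) + (inner ℝ (deriv (deriv X) t) (X t) : ℝ)) with hg2def
  have hg1 : ∀ t, HasDerivAt g1 (g2 t) t := fun t =>
    ((hd1 t).hasDerivAt.inner ℝ (hd2 t).hasDerivAt).add
      ((hd2 t).hasDerivAt.inner ℝ (hd1 t).hasDerivAt)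
  have hg2lb : ∀ t, T < t → 1 ≤ g2 t := by
    intro t ht
    have ht0 : (0:ℝ) ≤ t := le_of_lt (lt_of_le_of_lt hT0 ht)
    have h1 : (inner ℝ (deriv X t) (deriv X t) : ℝ) = 1 := by
      rw [real_inner_self_eq_norm_sq, harc t ht0]; norm_num
    have h2 : -(1/2 : ℝ) ≤ (inner ℝ (deriv (deriv X) t) (X t) : ℝ) := hin t ht.le
    have h3 : -(1/2 : ℝ) ≤ (inner ℝ (X t) (deriv (deriv X) t) : ℝ) := by
      rw [real_inner_comm]; exact h2
    simp only [hg2def, h1]; linarith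
  -- first monotonicity: g1 t - t is monotone on [T, ∞)
  have hφ : ∀ t, HasDerivAt (fun s => g1 s - s) (g2 t - 1) t := fun t =>
    (hg1 t).sub (hasDerivAt_id t)
  have hmono1 : MonotoneOn (fun s => g1 s - s) (Ici T) := by
    apply monotoneOn_of_deriv_nonneg (convex_Ici T)
    · exact (fun t _ => ((hφ t).differentiableAt).continuousAt.continuousWithinAt)
    · exact fun t _ => ((hφ t).differentiableAt).differentiableWithinAt
    · intro x hx
      rw [interior_Ici] at hx
      rw [(hφ x).deriv]
      linarith [hg2lb x hx]
  set A : ℝ := g1 T with hA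
  have hg1lb : ∀ t, T ≤ t → A + (t - T) ≤ g1 t := by
    intro t ht
    have := hmono1 (Set.mem_Ici.mpr le_rfl) ht ht
    simp only at this
    linarith
  -- second monotonicity: g t - (t-T)^2/2 - A*t monotone on [T, ∞)
  have hψ : ∀ t, HasDerivAt (fun s => g s - (s - T)^2/2 - A*s)
      (g1 t - (t - T) - A) t := by
    intro t
    have h1 : HasDerivAt (fun s : ℝ => (s - T)^2/2) (t - T) t := by
      have := (((hasDerivAt_id t).sub_const T).pow 2).div_const 2
      exact this.congr_deriv (by simp)
    have := ((hg t).sub h1).sub ((hasDerivAt_id t).const_mul A)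
    exact this.congr_deriv (by ring)
  have hmono2 : MonotoneOn (fun s => g s - (s - T)^2/2 - A*s) (Ici T) := by
    apply monotoneOn_of_deriv_nonneg (convex_Ici T)
    · exact (fun t _ => ((hψ t).differentiableAt).continuousAt.continuousWithinAt)
    · exact fun t _ => ((hψ t).differentiableAt).differentiableWithinAt
    · intro x hx
      rw [interior_Ici] at hx
      rw [(hψ x).deriv]
      linarith [hg1lb x hx.le]
  have hglb : ∀ t, T ≤ t → (t - T)^2/2 + A*(t - T) ≤ g t := by
    intro t ht
    have h := hmono2 (Set.mem_Ici.mpr le_rfl) ht ht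
    simp only at h
    have hgT : 0 ≤ g T := real_inner_self_nonneg
    nlinarith
  -- conclusion
  refine ⟨1/4, by norm_num, max (2*T) (max (16*|A|) 1), ?_⟩
  intro t ht
  have ht1 : (1:ℝ) ≤ t := le_trans (le_trans (le_max_right _ _) (le_max_right _ _)) ht
  have ht2 : 2*T ≤ t := le_trans (le_max_left _ _) ht
  have htA : 16*|A| ≤ t := le_trans (le_trans (le_max_left _ _) (le_max_right _ _)) ht
  have htT : T ≤ t := by linarith
  have hgt := hglb t htT
  simp only [hgdef] at hgt
  rw [real_inner_self_eq_norm_sq (X t)] at hgt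
  clear_value A
  have hhalf : t/2 ≤ t - T := by linarith
  have hq1 : (t/2)*(t/2) ≤ (t-T)*(t-T) := mul_self_le_mul_self (by linarith) hhalf
  have hq2 : (0:ℝ) ≤ (A + |A|) * (t - T) :=
    mul_nonneg (by linarith [neg_abs_le A]) (by linarith)
  have hq3 : |A| * (t - T) ≤ |A| * t := mul_le_mul_of_nonneg_left (by linarith) (abs_nonneg A)
  have hq4 : |A| * t ≤ t^2/16 := by
    nlinarith [mul_nonneg (sub_nonneg.mpr htA) (by linarith : (0:ℝ) ≤ t)]
  have hq : (t/4)^2 ≤ ‖X t‖^2 := by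
    nlinarith [mul_nonneg (abs_nonneg A) hT0]
  nlinarith [norm_nonneg (X t), hq]
end

section
/- Let u solve εΔu = ε^{−1}W'(u) in a ball B where u > 1 − b (for small b > 0, so that W''(u) ∈ (2−δ(b), 2+δ(b)) there). Suppose ψ ≥ 0 satisfies Δψ ≤ ((2+δ)/ε²) ψ in the rectangle Ω = {|x₁| < Lε, Lε < x₂ < ρ − Lε} ⊂ B and ψ ≥ c/ε on the bottom boundary {x₂ = Lε, |x₁| < Lε}. Then there is a constant c' > 0 (depending on L, δ, c) such that ψ(x₁, x₂) ≥ (c'/ε) exp(−√(2 + δ + C/L²) · (x₂ − Lε)/ε) for all (x₁, x₂) with |x₁| < Lε/2 and ρ/4 < x₂ < 3ρ/4, provided ε ≪ ρ ≤ ε|log ε|. -/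
open Real Filter MeasureTheory Metric Set Topology

lemma aux1 {g g1 : ℝ → ℝ} {q : ℝ}
    (h1 : ∀ᶠ t in 𝓝 (0:ℝ), HasDerivAt g (g1 t) t)
    (h2 : HasDerivAt g1 q 0)
    (hmin : IsLocalMin g 0) : 0 ≤ q := by
  by_contra hq
  push_neg at hq
  have hg0 : HasDerivAt g (g1 0) 0 := h1.self_of_nhds
  have hg10 : g1 0 = 0 := by
    have hd := hmin.deriv_eq_zero
    rwa [hg0.deriv] at hd
  -- slope of g1 tends to q < 0
  have hs := hasDerivAt_iff_tendsto_slope.1 h2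
  have hslope : ∀ᶠ t in 𝓝[≠] (0:ℝ), slope g1 0 t < q / 2 :=
    hs.eventually (gt_mem_nhds (by linarith))
  have hneg : ∀ᶠ t in 𝓝[>] (0:ℝ), g1 t < 0 := by
    filter_upwards [nhdsWithin_mono 0 (fun t (ht : t ∈ Ioi (0:ℝ)) =>
      (ne_of_gt ht : t ≠ 0)) hslope, self_mem_nhdsWithin] with t hst ht
    have ht' : (0:ℝ) < t := ht
    have : (g1 t - g1 0) / (t - 0) < q / 2 := by
      simpa [slope_def_field, div_eq_iff, hg10] using hst
    rw [hg10, sub_zero, sub_zero, div_lt_iff₀ ht'] at this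
    nlinarith
  have hall : ∀ᶠ t in 𝓝[>] (0:ℝ),
      HasDerivAt g (g1 t) t ∧ g 0 ≤ g t ∧ g1 t < 0 := by
    filter_upwards [nhdsWithin_le_nhds h1, nhdsWithin_le_nhds hmin, hneg] with t h1t h2t h3t
    exact ⟨h1t, h2t, h3t⟩
  rcases (mem_nhdsGT_iff_exists_Ioo_subset).1 hall with ⟨b, hb, hsub⟩
  have hb0 : (0:ℝ) < b := hb
  set t0 := b / 2 with ht0def
  have ht0 : t0 ∈ Ioo (0:ℝ) b := ⟨by positivity, by linarith⟩
  have hanti : StrictAntiOn g (Icc 0 t0) := by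
    apply strictAntiOn_of_deriv_neg (convex_Icc 0 t0)
    · intro x hx
      rcases eq_or_lt_of_le hx.1 with h | h
      · exact (h ▸ hg0).continuousAt.continuousWithinAt
      · exact ((hsub ⟨h, lt_of_le_of_lt hx.2 ht0.2⟩).1).continuousAt.continuousWithinAt
    · intro x hx
      rw [interior_Icc] at hx
      have hxm := hsub ⟨hx.1, lt_trans hx.2 ht0.2⟩
      rw [hxm.1.deriv]
      exact hxm.2.2
  have h1' : g t0 < g 0 :=
    hanti (left_mem_Icc.2 (le_of_lt ht0.1)) (right_mem_Icc.2 (le_of_lt ht0.1)) ht0.1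
  exact absurd (hsub ht0).2.1 (not_le.2 h1')

lemma dir_bound {ψ : ℝ × ℝ → ℝ} {U : Set (ℝ × ℝ)} (hU : IsOpen U) {p : ℝ × ℝ} (hp : p ∈ U)
    (hψ : ContDiffOn ℝ 2 ψ U) (v : ℝ × ℝ) {b b1 : ℝ → ℝ} {qb : ℝ}
    (hb : ∀ t, HasDerivAt b (b1 t) t) (hb1 : HasDerivAt b1 qb 0)
    (hmin : IsLocalMin (fun t => ψ (p + t • v) - b t) 0) :
    qb ≤ fderiv ℝ (fderiv ℝ ψ) p v v := by
  set ℓ : ℝ → ℝ × ℝ := fun t => p + t • v with hℓdef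
  have hℓ : ∀ t, HasDerivAt ℓ v t := by
    intro t
    have : HasDerivAt (fun t : ℝ => t • v) ((1:ℝ) • v) t := (hasDerivAt_id t).smul_const v
    have h2 := this.const_add p
    simp only [one_smul] at h2
    exact h2
  have hℓ0 : ℓ 0 = p := by simp [hℓdef]
  have hℓc : ContinuousAt ℓ 0 := (hℓ 0).continuousAt
  have hUmem : ∀ᶠ t in 𝓝 (0:ℝ), ℓ t ∈ U := by
    have : U ∈ 𝓝 (ℓ 0) := hU.mem_nhds (hℓ0 ▸ hp)
    exact hℓc this
  have h1 : ∀ᶠ t in 𝓝 (0:ℝ),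
      HasDerivAt (fun t => ψ (ℓ t) - b t) (fderiv ℝ ψ (ℓ t) v - b1 t) t := by
    filter_upwards [hUmem] with t ht
    have hdiff : DifferentiableAt ℝ ψ (ℓ t) :=
      (hψ.contDiffAt (hU.mem_nhds ht)).differentiableAt two_ne_zero
    exact (hdiff.hasFDerivAt.comp_hasDerivAt t (hℓ t)).sub (hb t)
  have h2 : HasDerivAt (fun t => fderiv ℝ ψ (ℓ t) v - b1 t)
      (fderiv ℝ (fderiv ℝ ψ) p v v - qb) 0 := by
    have hF1 : ContDiffAt ℝ 1 (fderiv ℝ ψ) p :=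
      (hψ.contDiffAt (hU.mem_nhds hp)).fderiv_right (le_refl 2)
    have hFd : HasFDerivAt (fderiv ℝ ψ) (fderiv ℝ (fderiv ℝ ψ) p) p :=
      (hF1.differentiableAt one_ne_zero).hasFDerivAt
    have hcomp : HasDerivAt (fun t => fderiv ℝ ψ (ℓ t)) (fderiv ℝ (fderiv ℝ ψ) p v) 0 := by
      have hFd' : HasFDerivAt (fderiv ℝ ψ) (fderiv ℝ (fderiv ℝ ψ) p) (ℓ 0) := by rw [hℓ0]; exact hFd
      exact hFd'.comp_hasDerivAt 0 (hℓ 0)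
    have heval := (ContinuousLinearMap.apply ℝ ℝ v).hasFDerivAt.comp_hasDerivAt 0 hcomp
    exact heval.sub hb1
  have := aux1 h1 h2 hmin
  linarith

noncomputable section

/-- The Laplacian on `ℝ × ℝ`. -/
def lapP (ψ : ℝ × ℝ → ℝ) (x : ℝ × ℝ) : ℝ :=
  iteratedFDeriv ℝ 2 ψ x (fun _ => ((1:ℝ), (0:ℝ))) +
  iteratedFDeriv ℝ 2 ψ x (fun _ => ((0:ℝ), (1:ℝ)))

/-- The open rectangle `Ω = {|x₁| < Lε, Lε < x₂ < ρ − Lε}`. -/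
def rect (ε ρ L : ℝ) : Set (ℝ × ℝ) :=
  {p : ℝ × ℝ | |p.1| < L * ε ∧ L * ε < p.2 ∧ p.2 < ρ - L * ε}

lemma lapP_eq (ψ : ℝ × ℝ → ℝ) (x : ℝ × ℝ) : lapP ψ x =
    fderiv ℝ (fderiv ℝ ψ) x ((1:ℝ),(0:ℝ)) ((1:ℝ),(0:ℝ)) +
    fderiv ℝ (fderiv ℝ ψ) x ((0:ℝ),(1:ℝ)) ((0:ℝ),(1:ℝ)) := by
  unfold lapP
  rw [iteratedFDeriv_two_apply, iteratedFDeriv_two_apply]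

set_option maxHeartbeats 2000000 in
theorem stmt_15 :
    ∃ C > (0:ℝ), ∀ L > (0:ℝ), ∀ δ > (0:ℝ), ∀ c > (0:ℝ),
      ∃ c' > (0:ℝ), ∃ ε₀ > (0:ℝ), ∃ M > (0:ℝ),
        ∀ ε : ℝ, 0 < ε → ε < ε₀ →
        ∀ ρ : ℝ, M * ε ≤ ρ → ρ ≤ ε * |Real.log ε| →
        ∀ ψ : ℝ × ℝ → ℝ,
          ContinuousOn ψ (closure (rect ε ρ L)) →
          ContDiffOn ℝ 2 ψ (rect ε ρ L) →
          (∀ p ∈ closure (rect ε ρ L), 0 ≤ ψ p) →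
          (∀ p ∈ rect ε ρ L, lapP ψ p ≤ (2 + δ) / ε ^ 2 * ψ p) →
          (∀ x₁ : ℝ, |x₁| ≤ L * ε → c / ε ≤ ψ (x₁, L * ε)) →
          ∀ x₁ x₂ : ℝ, |x₁| < L * ε / 2 → ρ / 4 < x₂ → x₂ < 3 * ρ / 4 →
            c' / ε * Real.exp (-(Real.sqrt (2 + δ + C / L ^ 2)) * (x₂ - L * ε) / ε)
              ≤ ψ (x₁, x₂) := by
  refine ⟨Real.pi ^ 2 / 4, by positivity, ?_⟩
  intro L hL δ hδ c hc
  refine ⟨c / 4, by positivity, 1, one_pos, 4 * L + 4, by positivity, ?_⟩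
  intro ε hε hε1 ρ hMρ hρlog ψ hψc hψ2 hψ0 hψlap hψbot x₁ x₂ hx₁ hx₂l hx₂u
  have hρ : (4 * L + 4) * ε ≤ ρ := hMρ
  set a : ℝ := L * ε with ha_def
  have ha : 0 < a := by positivity
  set k : ℝ := Real.pi / (2 * a) with hk_def
  have hk : 0 < k := by positivity
  have hka : k * a = Real.pi / 2 := by rw [hk_def]; field_simp
  set μ : ℝ := Real.sqrt (2 + δ + Real.pi ^ 2 / 4 / L ^ 2) / ε with hμ_def
  have hsqrt1 : (1:ℝ) ≤ Real.sqrt (2 + δ + Real.pi ^ 2 / 4 / L ^ 2) := by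
    rw [show (1:ℝ) = Real.sqrt 1 by simp]
    apply Real.sqrt_le_sqrt
    have : 0 ≤ Real.pi ^ 2 / 4 / L ^ 2 := by positivity
    linarith
  have hμ1 : 1 / ε ≤ μ := by rw [hμ_def]; gcongr
  have hμ : 0 < μ := lt_of_lt_of_le (by positivity) hμ1
  set A : ℝ := c / ε with hA_def
  have hA : 0 < A := by positivity
  set S : ℝ := ρ - 2 * a with hS_def
  have hS : 0 < S := by rw [hS_def, ha_def]; nlinarith
  set E : ℝ := Real.exp (-(μ * S)) with hE_def
  have hE0 : 0 < E := Real.exp_pos _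
  have hE1 : E ≤ 1 := Real.exp_le_one_iff.2 (by nlinarith)
  set φ : ℝ × ℝ → ℝ := fun q => A * Real.cos (k * q.1) * (Real.exp (-(μ * (q.2 - a))) - E)
    with hφ_def
  set lam : ℝ := (2 + δ) / ε ^ 2 with hlam_def
  have hlam : 0 < lam := by positivity
  have hμ2 : μ ^ 2 = lam + k ^ 2 := by
    rw [hμ_def, hlam_def, hk_def, ha_def, div_pow,
      Real.sq_sqrt (by positivity : (0:ℝ) ≤ 2 + δ + Real.pi ^ 2 / 4 / L ^ 2)]
    field_simp
    ring
  -- description of the rectangle and its closure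
  have hrect_eq : rect ε ρ L = Ioo (-a) a ×ˢ Ioo a (ρ - a) := by
    ext q
    simp [rect, abs_lt, Set.mem_prod, and_assoc, ha_def]
  have hrect_open : IsOpen (rect ε ρ L) := by
    rw [hrect_eq]; exact isOpen_Ioo.prod isOpen_Ioo
  have hKeq : closure (rect ε ρ L) = Icc (-a) a ×ˢ Icc a (ρ - a) := by
    rw [hrect_eq, closure_prod_eq, closure_Ioo (by linarith : (-a) ≠ a),
      closure_Ioo (by nlinarith : a ≠ ρ - a)]
  set K := closure (rect ε ρ L) with hK_def
  have hKcomp : IsCompact K := by rw [hKeq]; exact isCompact_Icc.prod isCompact_Icc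
  have hKne : K.Nonempty := by
    rw [hKeq]
    have h1 : (0:ℝ) ∈ Icc (-a) a := by rw [Set.mem_Icc]; constructor <;> linarith
    have h2 : a ∈ Icc a (ρ - a) := by
      rw [Set.mem_Icc]
      exact ⟨le_refl a, by linarith⟩
    exact ⟨(0, a), Set.mk_mem_prod h1 h2⟩
  -- continuity of φ
  have hφcont : Continuous φ := by
    rw [hφ_def]
    exact (continuous_const.mul (Real.continuous_cos.comp
        (continuous_const.mul continuous_fst))).mul
      ((Real.continuous_exp.comp
        ((continuous_const.mul (continuous_snd.sub continuous_const)).neg)).sub continuous_const)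
  -- minimum of h = ψ - φ on K
  have hhcont : ContinuousOn (fun q => ψ q - φ q) K := hψc.sub hφcont.continuousOn
  obtain ⟨p, hpK, hpmin⟩ := hKcomp.exists_isMinOn hKne hhcont
  -- cosine is nonneg on the strip
  have hcos_nonneg : ∀ y : ℝ, |y| ≤ a → 0 ≤ Real.cos (k * y) := by
    intro y hy
    apply Real.cos_nonneg_of_mem_Icc
    constructor
    · have : |k * y| ≤ Real.pi / 2 := by
        rw [abs_mul, abs_of_pos hk, ← hka]
        exact mul_le_mul_of_nonneg_left hy hk.le
      linarith [neg_abs_le (k * y)]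
    · have : |k * y| ≤ Real.pi / 2 := by
        rw [abs_mul, abs_of_pos hk, ← hka]
        exact mul_le_mul_of_nonneg_left hy hk.le
      linarith [le_abs_self (k * y)]
  -- the minimum value of ψ - φ on K is nonneg
  have hmin0 : 0 ≤ ψ p - φ p := by
    rcases em (p ∈ rect ε ρ L) with hpI | hpB
    · -- interior case: elliptic inequality at the minimum
      have hψp_le := hψlap p hpI
      have hKnp : K ∈ 𝓝 p := Filter.mem_of_superset (hrect_open.mem_nhds hpI)
        (hK_def ▸ subset_closure)
      have hloc : IsLocalMin (fun q => ψ q - φ q) p := hpmin.isLocalMin hKnp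
      obtain ⟨p1, p2⟩ := p
      have hpI' := hpI
      rw [hrect_eq] at hpI'
      have hmem1 : -a < p1 ∧ p1 < a := hpI'.1
      have hmem2 : a < p2 ∧ p2 < ρ - a := hpI'.2
      have habs1 : |p1| ≤ a := le_of_lt (abs_lt.2 hmem1)
      set X : ℝ := Real.exp (-(μ * (p2 - a))) with hX_def
      set c₁ : ℝ := A * Real.cos (k * p1) with hc1_def
      have hc₁ : 0 ≤ c₁ := mul_nonneg hA.le (hcos_nonneg p1 habs1)
      have hXpos : 0 < X := Real.exp_pos _
      -- directional local minima
      have hdirmin : ∀ v : ℝ × ℝ,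
          IsLocalMin (fun t : ℝ => ψ ((p1,p2) + t • v) - φ ((p1,p2) + t • v)) 0 := by
        intro v
        have hcont : Continuous (fun t : ℝ => (p1,p2) + t • v) :=
          continuous_const.add (continuous_id.smul continuous_const)
        have ht : Tendsto (fun t : ℝ => (p1,p2) + t • v) (𝓝 0) (𝓝 (p1,p2)) := by
          have h0 : (p1,p2) + (0:ℝ) • v = (p1,p2) := by simp
          simpa [h0] using hcont.tendsto 0
        have h0 : (p1,p2) + (0:ℝ) • v = (p1,p2) := by simp
        have hloc' : IsMinFilter (fun q => ψ q - φ q) (𝓝 (p1,p2))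
            ((p1,p2) + (0:ℝ) • v) := by rw [h0]; exact hloc
        exact IsMinFilter.comp_tendsto (g := fun t : ℝ => (p1,p2) + t • v) (b := (0:ℝ)) hloc' ht
      -- first direction
      have hq1 : -(k^2) * (c₁ * (X - E)) ≤
          fderiv ℝ (fderiv ℝ ψ) (p1,p2) ((1:ℝ),(0:ℝ)) ((1:ℝ),(0:ℝ)) := by
        have hb : ∀ t : ℝ, HasDerivAt (fun t : ℝ => A * Real.cos (k*(p1+t)) * (X - E))
            (A * (-Real.sin (k*(p1+t)) * k) * (X - E)) t := by
          intro t
          have hu : HasDerivAt (fun t : ℝ => k*(p1+t)) k t := by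
            simpa using ((hasDerivAt_id t).const_add p1).const_mul k
          have hcos : HasDerivAt (fun t : ℝ => Real.cos (k*(p1+t)))
              (-Real.sin (k*(p1+t)) * k) t := (Real.hasDerivAt_cos _).comp t hu
          exact (hcos.const_mul A).mul_const (X - E)
        have hb1 : HasDerivAt (fun t : ℝ => A * (-Real.sin (k*(p1+t)) * k) * (X - E))
            (-(k^2) * (c₁ * (X - E))) 0 := by
          have hu : HasDerivAt (fun t : ℝ => k*(p1+t)) k 0 := by
            simpa using ((hasDerivAt_id (0:ℝ)).const_add p1).const_mul k
          have hsin : HasDerivAt (fun t : ℝ => Real.sin (k*(p1+t)))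
              (Real.cos (k*(p1+0)) * k) 0 := (Real.hasDerivAt_sin _).comp 0 hu
          have hstep := ((hsin.neg.mul_const k).const_mul A).mul_const (X - E)
          refine hstep.congr_deriv ?_
          rw [hc1_def]
          simp only [add_zero]
          ring
        have hmin1 := hdirmin ((1:ℝ),(0:ℝ))
        have hfun : (fun t : ℝ => ψ ((p1,p2) + t • ((1:ℝ),(0:ℝ)))
              - A * Real.cos (k*(p1+t)) * (X - E))
            = fun t : ℝ => ψ ((p1,p2) + t • ((1:ℝ),(0:ℝ)))
              - φ ((p1,p2) + t • ((1:ℝ),(0:ℝ))) := by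
          funext t
          simp [hφ_def, hX_def, Prod.smul_mk, Prod.mk_add_mk]
        have hmin1' : IsLocalMin (fun t : ℝ => ψ ((p1,p2) + t • ((1:ℝ),(0:ℝ)))
            - A * Real.cos (k*(p1+t)) * (X - E)) 0 := by
          rw [hfun]; exact hmin1
        exact dir_bound hrect_open hpI hψ2 ((1:ℝ),(0:ℝ)) hb hb1 hmin1'
      -- second direction
      have hq2 : μ^2 * (c₁ * X) ≤
          fderiv ℝ (fderiv ℝ ψ) (p1,p2) ((0:ℝ),(1:ℝ)) ((0:ℝ),(1:ℝ)) := by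
        have hb : ∀ t : ℝ, HasDerivAt (fun t : ℝ =>
              c₁ * (Real.exp (-(μ*(p2+t-a))) - E))
            (c₁ * (Real.exp (-(μ*(p2+t-a))) * (-μ))) t := by
          intro t
          have hw : HasDerivAt (fun t : ℝ => -(μ*(p2+t-a))) (-μ) t := by
            exact ((((hasDerivAt_id t).const_add p2).sub_const a).const_mul μ).neg.congr_deriv (by ring)
          have hexp : HasDerivAt (fun t : ℝ => Real.exp (-(μ*(p2+t-a))))
              (Real.exp (-(μ*(p2+t-a))) * (-μ)) t := (Real.hasDerivAt_exp _).comp t hw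
          exact (hexp.sub_const E).const_mul c₁
        have hb1 : HasDerivAt (fun t : ℝ => c₁ * (Real.exp (-(μ*(p2+t-a))) * (-μ)))
            (μ^2 * (c₁ * X)) 0 := by
          have hw : HasDerivAt (fun t : ℝ => -(μ*(p2+t-a))) (-μ) 0 := by
            exact ((((hasDerivAt_id (0:ℝ)).const_add p2).sub_const a).const_mul μ).neg.congr_deriv (by ring)
          have hexp : HasDerivAt (fun t : ℝ => Real.exp (-(μ*(p2+t-a))))
              (Real.exp (-(μ*(p2+0-a))) * (-μ)) 0 := (Real.hasDerivAt_exp _).comp 0 hw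
          have hstep := (hexp.mul_const (-μ)).const_mul c₁
          refine hstep.congr_deriv ?_
          rw [hX_def]
          simp only [add_zero]
          ring
        have hmin2 := hdirmin ((0:ℝ),(1:ℝ))
        have hfun : (fun t : ℝ => ψ ((p1,p2) + t • ((0:ℝ),(1:ℝ)))
              - c₁ * (Real.exp (-(μ*(p2+t-a))) - E))
            = fun t : ℝ => ψ ((p1,p2) + t • ((0:ℝ),(1:ℝ)))
              - φ ((p1,p2) + t • ((0:ℝ),(1:ℝ))) := by
          funext t
          simp [hφ_def, hc1_def, Prod.smul_mk, Prod.mk_add_mk]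
        have hmin2' : IsLocalMin (fun t : ℝ => ψ ((p1,p2) + t • ((0:ℝ),(1:ℝ)))
            - c₁ * (Real.exp (-(μ*(p2+t-a))) - E)) 0 := by
          rw [hfun]; exact hmin2
        exact dir_bound hrect_open hpI hψ2 ((0:ℝ),(1:ℝ)) hb hb1 hmin2'
      -- combine via the Laplacian
      rw [lapP_eq] at hψp_le
      have hφp : φ (p1,p2) = c₁ * (X - E) := by
        rw [hφ_def, hc1_def, hX_def]
      have hck : 0 ≤ c₁ * E := mul_nonneg hc₁ hE0.le
      have hEX : lam * (c₁ * (X - E)) ≤ -(k^2) * (c₁ * (X - E)) + μ^2 * (c₁ * X) := by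
        rw [hμ2]
        nlinarith [mul_nonneg (sq_nonneg k) hck, mul_nonneg hlam.le hck]
      have hφψ : lam * φ (p1,p2) ≤ lam * ψ (p1,p2) := by
        rw [hφp]
        linarith
      have hfin : φ (p1,p2) ≤ ψ (p1,p2) := le_of_mul_le_mul_left hφψ hlam
      linarith
    · -- boundary case
      have hψp : 0 ≤ ψ p := hψ0 p hpK
      have hpK' := hpK
      rw [hKeq] at hpK'
      have h1' := Set.mem_Icc.1 hpK'.1
      have h2' := Set.mem_Icc.1 hpK'.2
      have habs : |p.1| ≤ a := abs_le.2 h1'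
      rw [hrect_eq] at hpB
      rcases eq_or_lt_of_le h1'.1 with e1 | l1
      · have hcz : Real.cos (k * p.1) = 0 := by
          rw [← e1, mul_neg, Real.cos_neg, hka, Real.cos_pi_div_two]
        have hφ0 : φ p = 0 := by rw [hφ_def]; simp [hcz]
        linarith
      rcases eq_or_lt_of_le h1'.2 with e2 | l2
      · have hcz : Real.cos (k * p.1) = 0 := by
          rw [e2, hka, Real.cos_pi_div_two]
        have hφ0 : φ p = 0 := by rw [hφ_def]; simp [hcz]
        linarith
      rcases eq_or_lt_of_le h2'.1 with e3 | l3
      · -- bottom boundary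
        have hcos1 : Real.cos (k * p.1) ≤ 1 := Real.cos_le_one _
        have hcos0 : 0 ≤ Real.cos (k * p.1) := hcos_nonneg p.1 habs
        have hexp1 : Real.exp (-(μ * (p.2 - a))) = 1 := by
          rw [← e3]; simp
        have hφb : φ p ≤ A := by
          rw [hφ_def]
          simp only [hexp1]
          have h0E : (0:ℝ) ≤ 1 - E := by linarith
          have hstep : A * Real.cos (k * p.1) * (1 - E) ≤ A * 1 * (1 - E) :=
            mul_le_mul_of_nonneg_right (mul_le_mul_of_nonneg_left hcos1 hA.le) h0E
          nlinarith [hE0]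
        have hψb : A ≤ ψ p := by
          have hb := hψbot p.1 habs
          have hpe : (p.1, a) = p := by rw [e3]
          rw [hpe] at hb
          exact hb
        linarith
      rcases eq_or_lt_of_le h2'.2 with e4 | l4
      · -- top boundary
        have hexpE : Real.exp (-(μ * (p.2 - a))) = E := by
          rw [hE_def, e4, hS_def]
          ring_nf
        have hφ0 : φ p = 0 := by
          rw [hφ_def]
          simp only [hexpE, sub_self, mul_zero]
        linarith
      · exact absurd (Set.mk_mem_prod (Set.mem_Ioo.2 ⟨l1, l2⟩) (Set.mem_Ioo.2 ⟨l3, l4⟩) :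
          (p.1, p.2) ∈ Ioo (-a) a ×ˢ Ioo a (ρ - a)) (by simpa using hpB)
  have hψφ : ∀ q ∈ K, φ q ≤ ψ q := by
    intro q hq
    have := hpmin hq
    simp only [Set.mem_setOf_eq] at this
    linarith
  -- apply at the target point
  have hx2a : a + ε ≤ x₂ := by
    have : a + ε ≤ ρ / 4 := by rw [ha_def]; linarith
    linarith
  have hx2b : x₂ ≤ ρ - a - ε := by
    have : a + ε ≤ ρ / 4 := by rw [ha_def]; linarith
    linarith
  have habs1 : |x₁| ≤ a := by linarith [hx₁]
  have hxK : (x₁, x₂) ∈ K := by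
    rw [hKeq]
    rcases abs_lt.1 hx₁ with ⟨hxl, hxr⟩
    refine Set.mk_mem_prod ?_ ?_
    · rw [Set.mem_Icc]; constructor <;> linarith
    · rw [Set.mem_Icc]; constructor <;> linarith
  have hψx := hψφ (x₁, x₂) hxK
  set X : ℝ := Real.exp (-(μ * (x₂ - a))) with hX_def
  have hXpos : 0 < X := Real.exp_pos _
  -- E is at most X/2
  have h2e : (2:ℝ) ≤ Real.exp 1 := by
    have := Real.add_one_le_exp 1
    linarith
  have hexpneg : Real.exp (-1 : ℝ) ≤ 1/2 := by
    rw [Real.exp_neg]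
    have := inv_anti₀ (by norm_num : (0:ℝ) < 2) h2e
    simpa using this
  have hmu1 : 1 ≤ μ * (S - (x₂ - a)) := by
    have h1 : ε ≤ S - (x₂ - a) := by rw [hS_def]; linarith
    calc (1:ℝ) = (1/ε) * ε := by field_simp
      _ ≤ μ * (S - (x₂ - a)) := mul_le_mul hμ1 h1 hε.le hμ.le
  have hEX2 : E ≤ X * (1/2) := by
    have hle : E ≤ Real.exp (-(μ * (x₂ - a)) + (-1)) := by
      rw [hE_def]
      apply Real.exp_le_exp.2
      nlinarith [hmu1]
    have heq : Real.exp (-(μ * (x₂ - a)) + (-1)) = X * Real.exp (-1 : ℝ) := by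
      rw [Real.exp_add, hX_def]
    rw [heq] at hle
    calc E ≤ X * Real.exp (-1 : ℝ) := hle
      _ ≤ X * (1/2) := mul_le_mul_of_nonneg_left hexpneg hXpos.le
  have hXE : X / 2 ≤ X - E := by linarith
  -- cosine lower bound
  have hcosb : Real.sqrt 2 / 2 ≤ Real.cos (k * x₁) := by
    have habsk : |k * x₁| ≤ Real.pi / 4 := by
      rw [abs_mul, abs_of_pos hk]
      calc k * |x₁| ≤ k * (a / 2) := mul_le_mul_of_nonneg_left hx₁.le hk.le
        _ = Real.pi / 4 := by rw [show k * (a/2) = k * a / 2 by ring, hka]; ring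
    calc Real.sqrt 2 / 2 = Real.cos (Real.pi / 4) := Real.cos_pi_div_four.symm
      _ ≤ Real.cos |k * x₁| := Real.cos_le_cos_of_nonneg_of_le_pi (abs_nonneg _)
          (by linarith [Real.pi_pos]) habsk
      _ = Real.cos (k * x₁) := Real.cos_abs _
  have hsqrt2 : (1:ℝ) ≤ Real.sqrt 2 := by
    rw [show (1:ℝ) = Real.sqrt 1 by simp]
    exact Real.sqrt_le_sqrt one_le_two
  -- assemble
  have hφeq : φ (x₁, x₂) = A * Real.cos (k * x₁) * (X - E) := by
    rw [hφ_def, hX_def]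
  have hcosx0 : 0 ≤ Real.cos (k * x₁) := hcos_nonneg x₁ habs1
  have s1 : A * (Real.sqrt 2 / 2) * (X / 2) ≤ A * Real.cos (k * x₁) * (X - E) := by
    apply mul_le_mul (mul_le_mul_of_nonneg_left hcosb hA.le) hXE (by positivity)
      (mul_nonneg hA.le hcosx0)
  have s2 : c / 4 / ε * X ≤ A * (Real.sqrt 2 / 2) * (X / 2) := by
    have heq2 : A * (Real.sqrt 2 / 2) * (X / 2) = c / ε * X * (Real.sqrt 2 / 4) := by
      rw [hA_def]; ring
    have heq3 : c / 4 / ε * X = c / ε * X * (1 / 4) := by ring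
    rw [heq2, heq3]
    apply mul_le_mul_of_nonneg_left (by linarith) (by positivity)
  have hexparg : -(Real.sqrt (2 + δ + Real.pi ^ 2 / 4 / L ^ 2)) * (x₂ - a) / ε
      = -(μ * (x₂ - a)) := by
    rw [hμ_def]; ring
  calc c / 4 / ε * Real.exp (-(Real.sqrt (2 + δ + Real.pi ^ 2 / 4 / L ^ 2)) * (x₂ - a) / ε)
      = c / 4 / ε * X := by rw [hexparg, hX_def]
    _ ≤ A * (Real.sqrt 2 / 2) * (X / 2) := s2
    _ ≤ A * Real.cos (k * x₁) * (X - E) := s1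
    _ = φ (x₁, x₂) := hφeq.symm
    _ ≤ ψ (x₁, x₂) := hψx

end
end

section
/- Let f : [−2, 2] → ℝ be a C² function satisfying f'' ≥ −C f² − C ε^{1/16} f, 0 < f ≤ 1, and ∫_{−2}^{2} f ≤ η for a sufficiently small universal constant η = η(C) > 0. Then, for ε small enough, sup_{[−1,1]} f ≤ 1/4. -/
open Real Filter MeasureTheory Metric Set Topology

set_option maxHeartbeats 1000000 in
theorem stmt_16 :
    ∀ C > (0:ℝ), ∃ η > (0:ℝ), ∃ ε₀ > (0:ℝ), ∀ ε : ℝ, 0 < ε → ε < ε₀ →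
      ∀ f f' f'' : ℝ → ℝ,
        (∀ x ∈ Set.Icc (-2:ℝ) 2, HasDerivAt f (f' x) x) →
        (∀ x ∈ Set.Icc (-2:ℝ) 2, HasDerivAt f' (f'' x) x) →
        (∀ x ∈ Set.Icc (-2:ℝ) 2, 0 < f x ∧ f x ≤ 1) →
        (∀ x ∈ Set.Icc (-2:ℝ) 2, -C * f x ^ 2 - C * ε ^ ((1:ℝ)/16) * f x ≤ f'' x) →
        (∫ x in Set.Icc (-2:ℝ) 2, f x) ≤ η →
        ∀ x ∈ Set.Icc (-1:ℝ) 1, f x ≤ 1/4 := by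
  intro C hC
  set δ : ℝ := min (1/2) (1/(64*C)) with hδdef
  have hδpos : 0 < δ := lt_min (by norm_num) (by positivity)
  have hδhalf : δ ≤ 1/2 := min_le_left _ _
  have hCδ : C * δ ≤ 1/64 := by
    have := min_le_right (1/2 : ℝ) (1/(64*C))
    have h64 : C * (1/(64*C)) = 1/64 := by field_simp
    nlinarith
  refine ⟨δ/8, by positivity, 1, by norm_num, ?_⟩
  intro ε hε hε1 f f' f'' hd1 hd2 hpos hineq hint x hx
  obtain ⟨hx1, hx2⟩ := hx
  -- continuity & integrability of f on [-2,2]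
  have hc : ContinuousOn f (Set.Icc (-2:ℝ) 2) := fun t ht =>
    (hd1 t ht).continuousAt.continuousWithinAt
  have hfi : IntegrableOn f (Set.Icc (-2:ℝ) 2) := hc.integrableOn_Icc
  have hf0 : 0 ≤ᵐ[volume.restrict (Set.Icc (-2:ℝ) 2)] f :=
    (ae_restrict_iff' measurableSet_Icc).2 (ae_of_all _ fun t ht => (hpos t ht).1.le)
  -- convexity of g
  have hgc : ContinuousOn (fun t => f t + C * t ^ 2) (Set.Icc (-2:ℝ) 2) :=
    hc.add (Continuous.continuousOn (by continuity))
  have hε16 : ε ^ ((1:ℝ)/16) ≤ 1 := Real.rpow_le_one hε.le (le_of_lt hε1) (by norm_num)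
  have hε16' : 0 ≤ ε ^ ((1:ℝ)/16) := Real.rpow_nonneg hε.le _
  have hconv : ConvexOn ℝ (Set.Icc (-2:ℝ) 2) (fun t => f t + C * t ^ 2) := by
    apply convexOn_of_hasDerivWithinAt2_nonneg (convex_Icc _ _) hgc
      (f' := fun t => f' t + C * (2 * t)) (f'' := fun t => f'' t + C * 2)
    · intro t ht
      rw [interior_Icc] at ht
      exact (((hd1 t (Ioo_subset_Icc_self ht)).add
        (((hasDerivAt_pow 2 t).const_mul C).congr_deriv (by ring))).hasDerivWithinAt)
    · intro t ht
      rw [interior_Icc] at ht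
      exact (((hd2 t (Ioo_subset_Icc_self ht)).add
        ((((hasDerivAt_id t).const_mul 2).const_mul C).congr_deriv (by ring))).hasDerivWithinAt)
    · intro t ht
      rw [interior_Icc] at ht
      have ht' := Ioo_subset_Icc_self ht
      have h1 := hineq t ht'
      have h2 := hpos t ht'
      have e1 : C * f t ^ 2 ≤ C * 1 := mul_le_mul_of_nonneg_left (by nlinarith) hC.le
      have e2 : C * ε ^ ((1:ℝ)/16) * f t ≤ C := by
        nlinarith [mul_le_mul_of_nonneg_left h2.2 (mul_nonneg hC.le hε16'),
          mul_le_mul_of_nonneg_right hε16 hC.le]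
      linarith
  -- pick good points on both sides
  have key : ∀ a b : ℝ, Set.Icc a b ⊆ Set.Icc (-2:ℝ) 2 → b - a = δ →
      ∃ y ∈ Set.Icc a b, f y ≤ 1/8 := by
    intro a b hab hba
    have hab' : a ≤ b := by linarith
    have hvol : volume (Set.Icc a b) = ENNReal.ofReal δ := by
      rw [Real.volume_Icc, hba]
    have hne : volume (Set.Icc a b) ≠ 0 := by
      rw [hvol]; simp [ENNReal.ofReal_eq_zero, not_le, hδpos]
    have hfin : volume (Set.Icc a b) ≠ ⊤ := by rw [hvol]; exact ENNReal.ofReal_ne_top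
    obtain ⟨y, hy, hfy⟩ := exists_le_setAverage hne hfin (hfi.mono_set hab)
    refine ⟨y, hy, hfy.trans ?_⟩
    rw [setAverage_eq, measureReal_def, hvol, ENNReal.toReal_ofReal hδpos.le, smul_eq_mul]
    have hmono : (∫ t in Set.Icc a b, f t) ≤ ∫ t in Set.Icc (-2:ℝ) 2, f t :=
      setIntegral_mono_set hfi hf0 (HasSubset.Subset.eventuallyLE hab)
    rw [inv_mul_le_iff₀ hδpos]
    calc (∫ t in Set.Icc a b, f t) ≤ δ/8 := hmono.trans hint
    _ ≤ δ * (1/8) := by linarith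
  have hs1 : Set.Icc (x - 2*δ) (x - δ) ⊆ Set.Icc (-2:ℝ) 2 := by
    intro t ht; constructor <;> [linarith [ht.1]; linarith [ht.2]]
  have hs2 : Set.Icc (x + δ) (x + 2*δ) ⊆ Set.Icc (-2:ℝ) 2 := by
    intro t ht; constructor <;> [linarith [ht.1]; linarith [ht.2]]
  obtain ⟨y₁, hy₁, hfy₁⟩ := key _ _ hs1 (by ring)
  obtain ⟨y₂, hy₂, hfy₂⟩ := key _ _ hs2 (by ring)
  -- convexity bound
  have hxseg : x ∈ segment ℝ y₁ y₂ := by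
    rw [segment_eq_Icc (by linarith [hy₁.2, hy₂.1])]
    exact ⟨by linarith [hy₁.2], by linarith [hy₂.1]⟩
  have hgx : f x + C * x ^ 2 ≤ max (f y₁ + C * y₁ ^ 2) (f y₂ + C * y₂ ^ 2) :=
    hconv.le_on_segment (hs1 hy₁) (hs2 hy₂) hxseg
  rcases le_max_iff.mp hgx with h | h
  · have hyb : y₁^2 - x^2 ≤ 6*δ := by
      nlinarith [hy₁.1, hy₁.2, mul_nonneg (sub_nonneg.2 hy₁.2) (sub_nonneg.2 hy₁.1)]
    have h2 : C * (y₁^2 - x^2) ≤ 6*(C*δ) := by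
      nlinarith [mul_le_mul_of_nonneg_left hyb hC.le]
    linarith
  · have hyb : y₂^2 - x^2 ≤ 6*δ := by
      nlinarith [hy₂.1, hy₂.2, mul_nonneg (sub_nonneg.2 hy₂.2) (sub_nonneg.2 hy₂.1)]
    have h2 : C * (y₂^2 - x^2) ≤ 6*(C*δ) := by
      nlinarith [mul_le_mul_of_nonneg_left hyb hC.le]
    linarith
end

section
/- Let u ∈ C²(ℝ²) solve Δu = W'(u), |u| < 1, with finite Morse index, and fix b ∈ (0,1). Suppose the curvature decay |B(u)(x)| ≤ C/|x| holds on {|u| ≤ 1−b} outside B_{R(b)}(0), and suppose the rescaled second-order estimate (Theorem 3.1) holds: any stable solution of the ε-Allen–Cahn equation in B₁ with |B(u_ε)| ≤ C on {|u_ε| < 1−b} satisfies |B(u_ε)| ≤ C ε^{1/7} on {|u_ε| < 1−b} ∩ B_{1/2}. Then the improved decay |B(u)(x)| ≤ C' |x|^{−8/7} holds on {|u| < 1−b} outside B_{R(b)}(0). -/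
open Real Filter MeasureTheory Metric Set Topology

noncomputable section

abbrev E2 : Type := EuclideanSpace ℝ (Fin 2)

/-- The Laplacian on `ℝ²`. -/
def lap2 (u : E2 → ℝ) (x : E2) : ℝ :=
  ∑ i : Fin 2, iteratedFDeriv ℝ 2 u x (fun _ => EuclideanSpace.single i (1:ℝ))

/-- The quadratic form of the linearized operator. -/
def quadForm (W : ℝ → ℝ) (u φ : E2 → ℝ) : ℝ :=
  ∫ x, (‖gradient φ x‖ ^ 2 + iteratedDeriv 2 W (u x) * φ x ^ 2)

/-- The Morse index of `u` is at least `N`. -/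
def hasIndexAtLeast (W : ℝ → ℝ) (u : E2 → ℝ) (N : ℕ) : Prop :=
  ∃ φ : Fin N → E2 → ℝ,
    (∀ i, ContDiff ℝ (⊤ : ℕ∞) (φ i) ∧ HasCompactSupport (φ i)) ∧
    LinearIndependent ℝ φ ∧
    ∀ c : Fin N → ℝ, c ≠ 0 → quadForm W u (fun x => ∑ i, c i * φ i x) < 0

/-- `u` has finite Morse index. -/
def finiteMorseIndex (W : ℝ → ℝ) (u : E2 → ℝ) : Prop :=
  ∃ N : ℕ, ¬ hasIndexAtLeast W u (N + 1)

/-- The full derivative of the unit normal `∇u/|∇u|`; its norm is `|B(u)|`. -/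
def Bmap (u : E2 → ℝ) (x : E2) : E2 →L[ℝ] E2 :=
  fderiv ℝ (fun y => ‖gradient u y‖⁻¹ • gradient u y) x

section AffineChain

variable {F : Type*} [NormedAddCommGroup F] [NormedSpace ℝ F]

lemma hasFDerivAt_affine (X : E2) (c : ℝ) (y : E2) :
    HasFDerivAt (fun z : E2 => X + c • z) (c • (ContinuousLinearMap.id ℝ E2)) y :=
  ((hasFDerivAt_id y).const_smul c).const_add X

lemma comp_smul_id (L : E2 →L[ℝ] F) (c : ℝ) :
    L.comp (c • ContinuousLinearMap.id ℝ E2) = c • L := by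
  ext z
  simp

lemma fderiv_comp_affine {f : E2 → F} {X : E2} {c : ℝ} {y : E2}
    (hf : DifferentiableAt ℝ f (X + c • y)) :
    fderiv ℝ (fun z => f (X + c • z)) y = c • fderiv ℝ f (X + c • y) := by
  have h := (hf.hasFDerivAt.comp y (hasFDerivAt_affine X c y)).fderiv
  rw [comp_smul_id] at h
  exact h

lemma diffAt_comp_affine {f : E2 → F} {X : E2} {c : ℝ} (hc : c ≠ 0) {y : E2}
    (h : DifferentiableAt ℝ (fun z => f (X + c • z)) y) :
    DifferentiableAt ℝ f (X + c • y) := by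
  have heq : f = fun w => (fun z => f (X + c • z)) (c⁻¹ • (w - X)) := by
    funext w
    simp [smul_smul, mul_inv_cancel₀ hc]
  have hinner : DifferentiableAt ℝ (fun w : E2 => c⁻¹ • (w - X)) (X + c • y) :=
    (differentiableAt_id.sub_const X).const_smul c⁻¹
  have hyval : c⁻¹ • ((X + c • y) - X) = y := by
    simp [smul_smul, inv_mul_cancel₀ hc]
  have hcomp : DifferentiableAt ℝ
      (fun w => (fun z => f (X + c • z)) (c⁻¹ • (w - X))) (X + c • y) := by
    exact DifferentiableAt.comp (f := fun w : E2 => c⁻¹ • (w - X))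
      (g := fun z => f (X + c • z)) (X + c • y) (by simpa [smul_smul, inv_mul_cancel₀ hc] using h) hinner
  have heq2 : (fun w => (fun z => f (X + c • z)) (c⁻¹ • (w - X))) = f := heq.symm
  rwa [heq2] at hcomp

lemma gradient_comp_affine {f : E2 → ℝ} {X : E2} {c : ℝ} {y : E2}
    (hf : DifferentiableAt ℝ f (X + c • y)) :
    gradient (fun z => f (X + c • z)) y = c • gradient f (X + c • y) := by
  unfold gradient
  rw [fderiv_comp_affine hf]
  exact (InnerProductSpace.toDual ℝ E2).symm.map_smul c _

end AffineChain

lemma gradient_eq_zero_of_nmem_tsupport {f : E2 → ℝ} {x : E2} (h : x ∉ tsupport f) :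
    gradient f x = 0 := by
  unfold gradient
  rw [(HasFDerivAt.of_notMem_tsupport ℝ h).fderiv, map_zero]

lemma continuous_gradient {f : E2 → ℝ} (hf : ContDiff ℝ 1 f) :
    Continuous (fun x => gradient f x) := by
  unfold gradient
  exact (LinearIsometryEquiv.continuous _).comp (hf.continuous_fderiv one_ne_zero)

lemma lap2_comp_affine {f : E2 → ℝ} (hf : ContDiff ℝ 2 f) (X : E2) {c : ℝ} (hc : c ≠ 0)
    (y : E2) :
    lap2 (fun z => f (X + c • z)) y = c ^ 2 * lap2 f (X + c • y) := by
  have hdf : Differentiable ℝ f := hf.differentiable two_ne_zero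
  have hdf' : Differentiable ℝ (fderiv ℝ f) :=
    (hf.fderiv_right (le_refl 2)).differentiable one_ne_zero
  have h1 : (fun z => fderiv ℝ (fun w => f (X + c • w)) z)
      = fun z => c • fderiv ℝ f (X + c • z) := by
    funext z
    exact fderiv_comp_affine (hdf _)
  have hdin : DifferentiableAt ℝ (fun z : E2 => fderiv ℝ f (X + c • z)) y := by
    exact ((hdf' _).comp y ((differentiableAt_id.const_smul c).const_add X) : _)
  have h2 : fderiv ℝ (fderiv ℝ (fun w => f (X + c • w))) y
      = c • (c • fderiv ℝ (fderiv ℝ f) (X + c • y)) := by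
    rw [show fderiv ℝ (fun w => f (X + c • w)) = fun z => c • fderiv ℝ f (X + c • z) from
      funext fun z => fderiv_comp_affine (hdf _)]
    rw [fderiv_fun_const_smul hdin c]
    rw [fderiv_comp_affine (hdf' _)]
  unfold lap2
  rw [Finset.mul_sum]
  refine Finset.sum_congr rfl (fun i _ => ?_)
  rw [iteratedFDeriv_two_apply, iteratedFDeriv_two_apply, h2]
  simp only [ContinuousLinearMap.smul_apply, smul_eq_mul]
  ring

lemma Bmap_comp_affine {f : E2 → ℝ} (hdf : Differentiable ℝ f) (X : E2) {c : ℝ}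
    (hc : 0 < c) (y : E2) :
    Bmap (fun z => f (X + c • z)) y = c • Bmap f (X + c • y) := by
  have hnv : (fun z => ‖gradient (fun w => f (X + c • w)) z‖⁻¹ •
        gradient (fun w => f (X + c • w)) z)
      = fun z => (fun w => ‖gradient f w‖⁻¹ • gradient f w) (X + c • z) := by
    funext z
    rw [gradient_comp_affine (hdf _)]
    rw [norm_smul, smul_smul]
    congr 1
    rw [Real.norm_eq_abs, abs_of_pos hc, mul_inv, mul_comm (c⁻¹), mul_assoc,
      inv_mul_cancel₀ hc.ne', mul_one]
  unfold Bmap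
  rw [hnv]
  by_cases hd : DifferentiableAt ℝ (fun w => ‖gradient f w‖⁻¹ • gradient f w) (X + c • y)
  · exact fderiv_comp_affine hd
  · rw [fderiv_zero_of_not_differentiableAt hd,
      show c • (0 : E2 →L[ℝ] E2) = 0 from by ext z; simp]
    exact fderiv_zero_of_not_differentiableAt (fun h => hd (diffAt_comp_affine hc.ne' h))

lemma norm_Bmap_comp_affine {f : E2 → ℝ} (hdf : Differentiable ℝ f) (X : E2) {c : ℝ}
    (hc : 0 < c) (y : E2) :
    ‖Bmap (fun z => f (X + c • z)) y‖ = c * ‖Bmap f (X + c • y)‖ := by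
  rw [Bmap_comp_affine hdf X hc y, norm_smul c (Bmap f (X + c • y)), Real.norm_eq_abs,
    abs_of_pos hc]

lemma integral_comp_affine (g : E2 → ℝ) (Y : E2) {c : ℝ} (hc : 0 < c) :
    ∫ z : E2, g (Y + c • z) = (c ^ 2)⁻¹ * ∫ z : E2, g z := by
  have h1 : ∫ z : E2, g (Y + c • z) = ∫ z : E2, (fun w => g (Y + w)) (c • z) := rfl
  rw [h1, MeasureTheory.Measure.integral_comp_smul volume (fun w => g (Y + w)) c]
  rw [MeasureTheory.integral_add_left_eq_self (fun w : E2 => g w) Y]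
  have : Module.finrank ℝ E2 = 2 := finrank_euclideanSpace_fin
  rw [this]
  rw [abs_of_pos (by positivity : (0:ℝ) < (c ^ 2)⁻¹), smul_eq_mul]


section Quad

variable {W : ℝ → ℝ} {u : E2 → ℝ}

lemma integrable_gradsq {φ : E2 → ℝ} (hφ : ContDiff ℝ (⊤ : ℕ∞) φ)
    (hc : HasCompactSupport φ) :
    Integrable (fun x => ‖gradient φ x‖ ^ 2) := by
  apply Continuous.integrable_of_hasCompactSupport
  · exact ((continuous_gradient (hφ.of_le (by exact_mod_cast le_top))).norm.pow 2)
  · apply HasCompactSupport.intro hc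
    intro x hx
    rw [gradient_eq_zero_of_nmem_tsupport hx]
    simp

lemma integrable_mulsq {g : E2 → ℝ} (hg : Continuous g) {φ : E2 → ℝ}
    (hφ : ContDiff ℝ (⊤ : ℕ∞) φ) (hc : HasCompactSupport φ) :
    Integrable (fun x => g x * φ x ^ 2) := by
  apply Continuous.integrable_of_hasCompactSupport
  · exact hg.mul (hφ.continuous.pow 2)
  · apply HasCompactSupport.intro hc
    intro x hx
    rw [image_eq_zero_of_notMem_tsupport hx]
    simp

lemma continuous_W'' (hW : ContDiff ℝ 2 W) (hu : Continuous u) :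
    Continuous (fun x => iteratedDeriv 2 W (u x)) :=
  (hW.continuous_iteratedDeriv 2 le_rfl).comp hu

lemma integrable_quadForm (hW : ContDiff ℝ 2 W) (hu : Continuous u) {φ : E2 → ℝ}
    (hφ : ContDiff ℝ (⊤ : ℕ∞) φ) (hc : HasCompactSupport φ) :
    Integrable (fun x => ‖gradient φ x‖ ^ 2 + iteratedDeriv 2 W (u x) * φ x ^ 2) :=
  (integrable_gradsq hφ hc).add (integrable_mulsq (continuous_W'' hW hu) hφ hc)

lemma quadForm_zero : quadForm W u (fun _ => 0) = 0 := by
  unfold quadForm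
  have : ∀ x : E2, ‖gradient (fun _ : E2 => (0:ℝ)) x‖ ^ 2
      + iteratedDeriv 2 W (u x) * (0:ℝ) ^ 2 = 0 := by
    intro x
    rw [show gradient (fun _ : E2 => (0:ℝ)) x = 0 from by
      unfold gradient; rw [fderiv_const_apply, map_zero]]
    simp
  simp only [this, integral_zero]

lemma quadForm_sum (hW : ContDiff ℝ 2 W) (hu : Continuous u)
    {n : ℕ} (φ : Fin n → E2 → ℝ) (hφ : ∀ i, ContDiff ℝ (⊤ : ℕ∞) (φ i))
    (hcs : ∀ i, HasCompactSupport (φ i))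
    (hdisj : ∀ i j, i ≠ j → Disjoint (tsupport (φ i)) (tsupport (φ j)))
    (c : Fin n → ℝ) :
    quadForm W u (fun x => ∑ i, c i * φ i x) = ∑ i, (c i) ^ 2 * quadForm W u (φ i) := by
  have hdiff : ∀ (i : Fin n) (x : E2), DifferentiableAt ℝ (fun y => c i * φ i y) x :=
    fun i x => (((hφ i).differentiable (by simp)) x).const_mul (c i)
  have hgradsum : ∀ x : E2, gradient (fun y => ∑ i, c i * φ i y) x
      = ∑ i, c i • gradient (φ i) x := by
    intro x
    unfold gradient
    rw [fderiv_fun_sum (fun i _ => hdiff i x)]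
    rw [map_sum]
    refine Finset.sum_congr rfl (fun i _ => ?_)
    rw [fderiv_const_mul (((hφ i).differentiable (by simp)) x) (c i)]
    exact (InnerProductSpace.toDual ℝ E2).symm.map_smul (c i) _
  have hpt : ∀ x : E2, ‖gradient (fun y => ∑ i, c i * φ i y) x‖ ^ 2
        + iteratedDeriv 2 W (u x) * (∑ i, c i * φ i x) ^ 2
      = ∑ i, (c i) ^ 2 * (‖gradient (φ i) x‖ ^ 2
        + iteratedDeriv 2 W (u x) * (φ i x) ^ 2) := by
    intro x
    rw [hgradsum x]
    by_cases hx : ∃ i, x ∈ tsupport (φ i)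
    · obtain ⟨i₀, hi₀⟩ := hx
      have hz : ∀ j, j ≠ i₀ → φ j x = 0 ∧ gradient (φ j) x = 0 := by
        intro j hj
        have hxj : x ∉ tsupport (φ j) :=
          fun hxj => Set.disjoint_left.1 (hdisj j i₀ hj) hxj hi₀
        exact ⟨image_eq_zero_of_notMem_tsupport hxj, gradient_eq_zero_of_nmem_tsupport hxj⟩
      rw [Finset.sum_eq_single i₀ (fun j _ hj => by rw [(hz j hj).2, smul_zero])
        (fun h => absurd (Finset.mem_univ i₀) h)]
      rw [Finset.sum_eq_single i₀ (fun j _ hj => by rw [(hz j hj).1, mul_zero])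
        (fun h => absurd (Finset.mem_univ i₀) h)]
      rw [Finset.sum_eq_single i₀ (fun j _ hj => by rw [(hz j hj).1, (hz j hj).2]; simp)
        (fun h => absurd (Finset.mem_univ i₀) h)]
      rw [norm_smul, Real.norm_eq_abs, mul_pow, sq_abs]
      ring
    · push_neg at hx
      have hz : ∀ j, φ j x = 0 ∧ gradient (φ j) x = 0 := fun j =>
        ⟨image_eq_zero_of_notMem_tsupport (hx j), gradient_eq_zero_of_nmem_tsupport (hx j)⟩
      simp only [fun j => (hz j).1, fun j => (hz j).2, smul_zero, mul_zero,
        Finset.sum_const_zero]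
      simp
  unfold quadForm
  rw [show (fun x => ‖gradient (fun y => ∑ i, c i * φ i y) x‖ ^ 2
      + iteratedDeriv 2 W (u x) * (∑ i, c i * φ i x) ^ 2)
    = fun x => ∑ i, (c i) ^ 2 * (‖gradient (φ i) x‖ ^ 2
      + iteratedDeriv 2 W (u x) * (φ i x) ^ 2) from funext hpt]
  rw [integral_finset_sum _ (fun i _ =>
    (integrable_quadForm hW hu (hφ i) (hcs i)).const_mul ((c i) ^ 2))]
  exact Finset.sum_congr rfl (fun i _ => integral_const_mul _ _)

lemma exists_stable_radius (hW : ContDiff ℝ 2 W) (hu : ContDiff ℝ 2 u)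
    (hmorse : finiteMorseIndex W u) :
    ∃ R₀ > (0:ℝ), ∀ ψ : E2 → ℝ, ContDiff ℝ (⊤ : ℕ∞) ψ → HasCompactSupport ψ →
      (∀ z ∈ tsupport ψ, R₀ < ‖z‖) → 0 ≤ quadForm W u ψ := by
  by_contra hcon
  push_neg at hcon
  have key : ∀ R : ℝ, ∃ ψ : E2 → ℝ, ∃ M : ℝ, R < M ∧
      ContDiff ℝ (⊤ : ℕ∞) ψ ∧ HasCompactSupport ψ ∧ (∀ z ∈ tsupport ψ, R < ‖z‖) ∧
      tsupport ψ ⊆ Metric.closedBall 0 M ∧ quadForm W u ψ < 0 := by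
    intro R
    obtain ⟨ψ, h1, h2, h3, h4⟩ := hcon (max R 1) (lt_of_lt_of_le one_pos (le_max_right R 1))
    obtain ⟨M', hM'⟩ := h2.isBounded.subset_closedBall 0
    refine ⟨ψ, max M' R + 1, by simp [lt_of_le_of_lt (le_max_right M' R)], h1, h2,
      fun z hz => lt_of_le_of_lt (le_max_left R 1) (h3 z hz),
      hM'.trans (Metric.closedBall_subset_closedBall
        (by simp [le_trans (le_max_left M' R) (le_of_lt (lt_add_one (max M' R)))])), h4⟩
  choose Ψ M hRM hsmooth hcpt hout hsub hneg using key
  obtain ⟨N, hN⟩ := hmorse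
  set r : ℕ → ℝ := fun k => Nat.rec (1:ℝ) (fun _ rk => M rk) k with hr
  have hrsucc : ∀ k, r (k + 1) = M (r k) := fun k => rfl
  have hrmono : StrictMono r := strictMono_nat_of_lt_succ (fun k => by
    rw [hrsucc]; exact hRM (r k))
  set φ : Fin (N + 1) → E2 → ℝ := fun i => Ψ (r i) with hφdef
  have hdisj : ∀ i j : Fin (N + 1), i ≠ j →
      Disjoint (tsupport (φ i)) (tsupport (φ j)) := by
    have haux : ∀ i j : Fin (N + 1), (i : ℕ) < (j : ℕ) →
        Disjoint (tsupport (φ i)) (tsupport (φ j)) := by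
      intro i j hij
      rw [Set.disjoint_left]
      intro z hzi hzj
      have h1 : ‖z‖ ≤ r ((i : ℕ) + 1) := by
        have := hsub (r i) hzi
        rw [hrsucc]
        simpa [Metric.mem_closedBall, dist_zero_right] using this
      have h2 : r (j : ℕ) < ‖z‖ := hout (r j) z hzj
      have h3 : r ((i : ℕ) + 1) ≤ r (j : ℕ) := hrmono.le_iff_le.2 hij
      linarith
    intro i j hij
    rcases lt_or_gt_of_ne (fun h : (i : ℕ) = (j : ℕ) => hij (Fin.ext h)) with h | h
    · exact haux i j h
    · exact (haux j i h).symm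
  apply hN
  refine ⟨φ, fun i => ⟨hsmooth _, hcpt _⟩, ?_, ?_⟩
  · rw [Fintype.linearIndependent_iff]
    intro g hg i
    have hne : ∃ x, φ i x ≠ 0 := by
      by_contra h
      push_neg at h
      have h0 : φ i = fun _ => 0 := funext h
      have hq : quadForm W u (φ i) < 0 := hneg (r i)
      rw [h0, quadForm_zero] at hq
      exact absurd hq (lt_irrefl 0)
    obtain ⟨x, hx⟩ := hne
    have hxmem : x ∈ tsupport (φ i) := subset_tsupport _ hx
    have hgx := congrFun hg x
    simp only [Finset.sum_apply, Pi.smul_apply, smul_eq_mul, Pi.zero_apply] at hgx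
    rw [Finset.sum_eq_single i (fun j _ hj => by
        rw [image_eq_zero_of_notMem_tsupport
          (fun hm => Set.disjoint_left.1 (hdisj j i hj) hm hxmem), mul_zero])
      (fun h => absurd (Finset.mem_univ i) h)] at hgx
    exact (mul_eq_zero.1 hgx).resolve_right hx
  · intro c hc
    rw [quadForm_sum hW (hu.continuous) φ (fun i => hsmooth _) (fun i => hcpt _) hdisj c]
    obtain ⟨i₀, hi₀⟩ := Function.ne_iff.1 hc
    have hterm : ∀ i : Fin (N + 1), (c i) ^ 2 * quadForm W u (φ i) ≤ 0 :=
      fun i => mul_nonpos_of_nonneg_of_nonpos (sq_nonneg _) (le_of_lt (hneg (r i)))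
    have hterm₀ : (c i₀) ^ 2 * quadForm W u (φ i₀) < 0 :=
      mul_neg_of_pos_of_neg (sq_pos_iff.2 hi₀) (hneg (r i₀))
    calc ∑ i, (c i) ^ 2 * quadForm W u (φ i)
        < ∑ _i : Fin (N + 1), (0:ℝ) := by
          apply Finset.sum_lt_sum (fun i _ => hterm i) ⟨i₀, Finset.mem_univ i₀, hterm₀⟩
      _ = 0 := by simp

end Quad

set_option maxHeartbeats 1000000 in
theorem stmt_19 (W : ℝ → ℝ) (hW : ContDiff ℝ 2 W)
    (hWpos : ∀ s ∈ Set.Ioo (-1:ℝ) 1, 0 < W s)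
    (hWm1 : W (-1) = 0) (hWp1 : W 1 = 0)
    (hWm1' : deriv W (-1) = 0) (hWp1' : deriv W 1 = 0)
    (hWm1'' : iteratedDeriv 2 W (-1) = 2) (hWp1'' : iteratedDeriv 2 W 1 = 2)
    (hW0 : deriv W 0 = 0)
    (hWuniq : ∀ s ∈ Set.Ioo (-1:ℝ) 1, deriv W s = 0 → s = 0)
    (u : E2 → ℝ) (hu : ContDiff ℝ 2 u) (hub : ∀ x, |u x| < 1)
    (heq : ∀ x, lap2 u x = deriv W (u x))
    (hmorse : finiteMorseIndex W u)
    (b : ℝ) (hb : b ∈ Set.Ioo (0:ℝ) 1)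
    (C₁ R₁ : ℝ) (hC₁ : 0 < C₁) (hR₁ : 0 < R₁)
    -- the curvature decay `|B(u)(x)| ≤ C/|x|` on `{|u| ≤ 1-b}` outside `B_{R₁}` :
    (hdecay : ∀ x : E2, |u x| ≤ 1 - b → R₁ ≤ ‖x‖ → ‖Bmap u x‖ ≤ C₁ / ‖x‖)
    -- the rescaled second-order estimate (Theorem 3.1) :
    (hthm : ∀ C₂ > (0:ℝ), ∃ C₃ > (0:ℝ), ∃ ε₀ > (0:ℝ), ∀ ε : ℝ, 0 < ε → ε < ε₀ →
      ∀ v : E2 → ℝ,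
        ContDiffOn ℝ 2 v (Metric.ball (0:E2) 1) →
        (∀ x ∈ Metric.ball (0:E2) 1, |v x| < 1) →
        (∀ x ∈ Metric.ball (0:E2) 1, ε * lap2 v x = ε⁻¹ * deriv W (v x)) →
        (∀ φ : E2 → ℝ, ContDiff ℝ (⊤ : ℕ∞) φ → HasCompactSupport φ →
          tsupport φ ⊆ Metric.ball (0:E2) 1 →
          0 ≤ ∫ x, (ε * ‖gradient φ x‖ ^ 2 + ε⁻¹ * iteratedDeriv 2 W (v x) * φ x ^ 2)) →
        (∀ x ∈ Metric.ball (0:E2) 1, |v x| < 1 - b → ‖Bmap v x‖ ≤ C₂) →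
        ∀ x ∈ Metric.ball (0:E2) (1/2), |v x| < 1 - b →
          ‖Bmap v x‖ ≤ C₃ * ε ^ ((1:ℝ)/7)) :
    ∃ C' > (0:ℝ), ∃ R' > (0:ℝ), ∀ x : E2, |u x| < 1 - b → R' ≤ ‖x‖ →
      ‖Bmap u x‖ ≤ C' * ‖x‖ ^ (-(8:ℝ)/7) := by
  obtain ⟨R₀, hR₀, hstable⟩ := exists_stable_radius hW hu hmorse
  obtain ⟨C₃, hC₃, ε₀, hε₀, hmain⟩ := hthm C₁ hC₁
  refine ⟨C₃ * (2:ℝ) ^ ((8:ℝ)/7), by positivity,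
    max (max (2 * R₁) (2 * R₀ + 1)) (2 / ε₀ + 1), by positivity, ?_⟩
  intro X hXu hRX
  have hX1 : 2 * R₁ ≤ ‖X‖ := le_trans (le_trans (le_max_left _ _) (le_max_left _ _)) hRX
  have hX2 : 2 * R₀ + 1 ≤ ‖X‖ := le_trans (le_trans (le_max_right _ _) (le_max_left _ _)) hRX
  have hX3 : 2 / ε₀ + 1 ≤ ‖X‖ := le_trans (le_max_right _ _) hRX
  have hXpos : 0 < ‖X‖ := lt_of_lt_of_le (by positivity) hX3
  set c : ℝ := ‖X‖ / 2 with hcdef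
  have hcpos : 0 < c := by positivity
  set ε : ℝ := 2 / ‖X‖ with hεdef
  have hεpos : 0 < ε := by positivity
  have hcε : c = ε⁻¹ := by rw [hεdef, hcdef]; field_simp
  have hεc : ε = c⁻¹ := by rw [hcε, inv_inv]
  have hεlt : ε < ε₀ := by
    have e1 : ε₀ * (2 / ε₀ + 1) = 2 + ε₀ := by field_simp
    rw [hεdef, div_lt_iff₀ hXpos]
    nlinarith [mul_le_mul_of_nonneg_left hX3 hε₀.le]
  have hudiff : Differentiable ℝ u := hu.differentiable two_ne_zero
  have hz : ∀ y : E2, ‖y‖ ≤ 1 → ‖X‖ / 2 ≤ ‖X + c • y‖ := by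
    intro y hy
    have h1 : ‖c • y‖ ≤ c := by
      rw [norm_smul, Real.norm_eq_abs, abs_of_pos hcpos]
      nlinarith [norm_nonneg y]
    have h2 : ‖X‖ ≤ ‖X + c • y‖ + ‖c • y‖ := by
      have := norm_sub_le (X + c • y) (c • y)
      simpa using this
    have h3 : c = ‖X‖ / 2 := hcdef
    linarith
  -- hypotheses for hmain with v = fun y => u (X + c • y)
  have hv1 : ContDiffOn ℝ 2 (fun y => u (X + c • y)) (Metric.ball (0:E2) 1) :=
    (hu.comp ((contDiff_const.add (contDiff_id.const_smul c)))).contDiffOn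
  have hv2 : ∀ x ∈ Metric.ball (0:E2) 1, |(fun y => u (X + c • y)) x| < 1 := fun x _ => hub _
  have hv3 : ∀ x ∈ Metric.ball (0:E2) 1,
      ε * lap2 (fun y => u (X + c • y)) x = ε⁻¹ * deriv W ((fun y => u (X + c • y)) x) := by
    intro x _
    rw [lap2_comp_affine hu X hcpos.ne' x, heq]
    rw [hcε]
    have hεne : ε ≠ 0 := hεpos.ne'
    field_simp
  have hvcont : Continuous (fun y => u (X + c • y)) :=
    hu.continuous.comp (continuous_const.add (continuous_id.const_smul c))
  have hWvcont : Continuous (fun w => iteratedDeriv 2 W (u (X + c • w))) :=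
    (hW.continuous_iteratedDeriv 2 le_rfl).comp hvcont
  have hv4 : ∀ φ : E2 → ℝ, ContDiff ℝ (⊤ : ℕ∞) φ → HasCompactSupport φ →
      tsupport φ ⊆ Metric.ball (0:E2) 1 →
      0 ≤ ∫ x, (ε * ‖gradient φ x‖ ^ 2
        + ε⁻¹ * iteratedDeriv 2 W ((fun y => u (X + c • y)) x) * φ x ^ 2) := by
    intro φ hφ hφc hφsupp
    have hφdiff : Differentiable ℝ φ := hφ.differentiable (by simp)
    set Y : E2 := -(ε • X) with hYdef
    have hψs : ContDiff ℝ (⊤ : ℕ∞) (fun z => φ (Y + ε • z)) :=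
      hφ.comp (contDiff_const.add (contDiff_id.const_smul ε))
    have hψc : HasCompactSupport (fun z => φ (Y + ε • z)) := by
      have heqc : (fun z => φ (Y + ε • z))
          = φ ∘ ((Homeomorph.smulOfNeZero ε hεpos.ne').trans (Homeomorph.addLeft Y)) := rfl
      rw [heqc]
      exact hφc.comp_homeomorph _
    have haff : ∀ z : E2, Y + ε • z = ε • (z - X) := by
      intro z
      rw [hYdef, smul_sub]
      abel
    have hsupp : ∀ z ∈ tsupport (fun z => φ (Y + ε • z)), R₀ < ‖z‖ := by
      have hsub : Function.support (fun z => φ (Y + ε • z)) ⊆ {z : E2 | ‖X‖/2 ≤ ‖z‖} := by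
        intro z hzs
        have hmem : (Y + ε • z) ∈ tsupport φ := subset_tsupport _ hzs
        have hball := hφsupp hmem
        rw [mem_ball_zero_iff] at hball
        rw [haff z, norm_smul, Real.norm_eq_abs, abs_of_pos hεpos] at hball
        have h1 : ‖z - X‖ < ‖X‖ / 2 := by
          rw [hεdef] at hball
          rw [div_mul_eq_mul_div, div_lt_one hXpos] at hball
          linarith
        have h2 : ‖X‖ ≤ ‖z‖ + ‖z - X‖ := by
          have := norm_sub_le z (z - X)
          simpa using this
        show ‖X‖/2 ≤ ‖z‖
        linarith
      intro z hzt
      have hcl : z ∈ closure (Function.support (fun z => φ (Y + ε • z))) := hzt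
      have := closure_minimal hsub (isClosed_le continuous_const continuous_norm) hcl
      have hle : ‖X‖/2 ≤ ‖z‖ := this
      linarith
    have h0 := hstable _ hψs hψc hsupp
    have hgradψ : ∀ z : E2, gradient (fun z => φ (Y + ε • z)) z = ε • gradient φ (Y + ε • z) :=
      fun z => gradient_comp_affine (hφdiff _)
    have huz : ∀ z : E2, u (X + c • (Y + ε • z)) = u z := by
      intro z
      congr 1
      rw [haff z, hcε, smul_smul, inv_mul_cancel₀ hεpos.ne', one_smul]
      abel
    set I₁ : ℝ := ∫ w, ‖gradient φ w‖ ^ 2 with hI₁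
    set I₂ : ℝ := ∫ w, iteratedDeriv 2 W (u (X + c • w)) * φ w ^ 2 with hI₂
    have hA : (∫ z : E2, ‖gradient (fun z => φ (Y + ε • z)) z‖ ^ 2) = I₁ := by
      calc (∫ z : E2, ‖gradient (fun z => φ (Y + ε • z)) z‖ ^ 2)
          = ∫ z : E2, (fun w => ε ^ 2 * ‖gradient φ w‖ ^ 2) (Y + ε • z) := by
            congr 1
            funext z
            simp only
            rw [hgradψ z, norm_smul, Real.norm_eq_abs, abs_of_pos hεpos, mul_pow]
        _ = (ε ^ 2)⁻¹ * ∫ w : E2, ε ^ 2 * ‖gradient φ w‖ ^ 2 :=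
            integral_comp_affine (fun w => ε ^ 2 * ‖gradient φ w‖ ^ 2) Y hεpos
        _ = I₁ := by
            rw [integral_const_mul, ← hI₁]
            field_simp
    have hB : (∫ z : E2, iteratedDeriv 2 W (u z) * (fun z => φ (Y + ε • z)) z ^ 2)
        = (ε ^ 2)⁻¹ * I₂ := by
      calc (∫ z : E2, iteratedDeriv 2 W (u z) * (fun z => φ (Y + ε • z)) z ^ 2)
          = ∫ z : E2, (fun w => iteratedDeriv 2 W (u (X + c • w)) * φ w ^ 2) (Y + ε • z) := by
            congr 1
            funext z
            simp only
            rw [huz z]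
        _ = (ε ^ 2)⁻¹ * ∫ w : E2, iteratedDeriv 2 W (u (X + c • w)) * φ w ^ 2 :=
            integral_comp_affine (fun w => iteratedDeriv 2 W (u (X + c • w)) * φ w ^ 2) Y hεpos
        _ = (ε ^ 2)⁻¹ * I₂ := by rw [← hI₂]
    have hsplit : quadForm W u (fun z => φ (Y + ε • z)) = I₁ + (ε ^ 2)⁻¹ * I₂ := by
      unfold quadForm
      rw [integral_add (integrable_gradsq hψs hψc)
        (integrable_mulsq (continuous_W'' hW hu.continuous) hψs hψc)]
      rw [hA, hB]
    rw [hsplit] at h0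
    have htarget : ∫ x, (ε * ‖gradient φ x‖ ^ 2
        + ε⁻¹ * iteratedDeriv 2 W (u (X + c • x)) * φ x ^ 2)
        = ε * I₁ + ε⁻¹ * I₂ := by
      have heq3 : (fun x : E2 => ε * ‖gradient φ x‖ ^ 2
          + ε⁻¹ * iteratedDeriv 2 W (u (X + c • x)) * φ x ^ 2)
          = fun x : E2 => ε * ‖gradient φ x‖ ^ 2
          + ε⁻¹ * (iteratedDeriv 2 W (u (X + c • x)) * φ x ^ 2) := by
        funext x
        ring
      rw [heq3, integral_add ((integrable_gradsq hφ hφc).const_mul ε)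
        ((integrable_mulsq hWvcont hφ hφc).const_mul ε⁻¹),
        integral_const_mul, integral_const_mul, ← hI₁, ← hI₂]
    rw [htarget]
    have hh : ε * (I₁ + (ε ^ 2)⁻¹ * I₂) = ε * I₁ + ε⁻¹ * I₂ := by
      field_simp
    nlinarith [mul_nonneg hεpos.le h0]
  have hv5 : ∀ x ∈ Metric.ball (0:E2) 1, |(fun y => u (X + c • y)) x| < 1 - b →
      ‖Bmap (fun y => u (X + c • y)) x‖ ≤ C₁ := by
    intro y hy hvy
    have hyn : ‖y‖ ≤ 1 := le_of_lt (mem_ball_zero_iff.1 hy)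
    have hBv : ‖Bmap (fun y => u (X + c • y)) y‖ = c * ‖Bmap u (X + c • y)‖ :=
      norm_Bmap_comp_affine hudiff X hcpos y
    have hzn : ‖X‖ / 2 ≤ ‖X + c • y‖ := hz y hyn
    have hR1 : R₁ ≤ ‖X + c • y‖ := le_trans (by linarith) hzn
    have hd := hdecay (X + c • y) (le_of_lt hvy) hR1
    rw [hBv]
    have hzpos : (0:ℝ) < ‖X + c • y‖ := lt_of_lt_of_le (by linarith) hzn
    calc c * ‖Bmap u (X + c • y)‖ ≤ c * (C₁ / ‖X + c • y‖) :=
          mul_le_mul_of_nonneg_left hd hcpos.le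
      _ ≤ c * (C₁ / (‖X‖ / 2)) := by
          apply mul_le_mul_of_nonneg_left _ hcpos.le
          apply div_le_div_of_nonneg_left hC₁.le (by positivity) hzn
      _ = C₁ := by rw [hcdef]; field_simp
  have h0mem : (0:E2) ∈ Metric.ball (0:E2) (1/2) := Metric.mem_ball_self (by norm_num)
  have hv0 : |(fun y => u (X + c • y)) 0| < 1 - b := by
    simpa using hXu
  have hfin := hmain ε hεpos hεlt _ hv1 hv2 hv3 hv4 hv5 0 h0mem hv0
  have hB0 : ‖Bmap (fun y => u (X + c • y)) 0‖ = c * ‖Bmap u X‖ := by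
    have := norm_Bmap_comp_affine hudiff X hcpos 0
    simpa using this
  rw [hB0] at hfin
  have hstep : ‖Bmap u X‖ ≤ C₃ * ε ^ ((1:ℝ)/7) * ε := by
    have hfin' : ‖Bmap u X‖ ≤ (C₃ * ε ^ ((1:ℝ)/7)) / c := by
      rw [le_div_iff₀ hcpos, mul_comm]
      exact hfin
    calc ‖Bmap u X‖ ≤ C₃ * ε ^ ((1:ℝ)/7) / c := hfin'
      _ = C₃ * ε ^ ((1:ℝ)/7) * ε := by rw [hεc, div_eq_mul_inv]
  have hε87 : ε ^ ((1:ℝ)/7) * ε = ε ^ ((8:ℝ)/7) := by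
    have h := Real.rpow_add hεpos (1/7) 1
    rw [Real.rpow_one] at h
    rw [show (1:ℝ)/7 + 1 = (8:ℝ)/7 by norm_num] at h
    exact h.symm
  have hrpow : ε ^ ((8:ℝ)/7) = 2 ^ ((8:ℝ)/7) * ‖X‖ ^ (-(8:ℝ)/7) := by
    rw [show (-(8:ℝ)/7) = -((8:ℝ)/7) by norm_num]
    rw [hεdef, Real.div_rpow (by norm_num : (0:ℝ) ≤ 2) hXpos.le, div_eq_mul_inv,
      ← Real.rpow_neg hXpos.le]
  calc ‖Bmap u X‖ ≤ C₃ * ε ^ ((1:ℝ)/7) * ε := hstep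
    _ = C₃ * ε ^ ((8:ℝ)/7) := by rw [mul_assoc, hε87]
    _ = C₃ * (2 ^ ((8:ℝ)/7) * ‖X‖ ^ (-(8:ℝ)/7)) := by rw [hrpow]
    _ = C₃ * 2 ^ ((8:ℝ)/7) * ‖X‖ ^ (-(8:ℝ)/7) := by ring


end
end
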